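/- arXiv:1702.02704 — 3 statements merged into one kernel-verified Lean document; each statement's English description precedes it below -/
import Mathlib

section
/- Let p, q be prime numbers, a_s = p, b_d = q, and suppose Δ(A,B) is Gorenstein of some index r. Then b_s = 0 or b_s = q − 1. -/
open scoped BigOperators
open MeasureTheory

noncomputable section

/-- The real point corresponding to a lattice point. -/
def toReal {d : ℕ} (v : Fin d → ℤ) : Fin d → ℝ := fun i => (v i : ℝ)

/-- The finite abelian group `Λ_Δ ⊆ (ℝ/ℤ)^{d+1}` attached to a lattice simplex with
vertices `v 0, …, v d`. -/
def LambdaSet {d : ℕ} (v : Fin (d + 1) → Fin d → ℤ) :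
    Set (Fin (d + 1) → AddCircle (1 : ℝ)) :=
  {lam | ∃ mu : Fin (d + 1) → ℝ,
    (∀ i, ((mu i : ℝ) : AddCircle (1 : ℝ)) = lam i) ∧
    (∀ j, ∃ n : ℤ, ∑ i, mu i * (v i j : ℝ) = (n : ℝ)) ∧
    (∃ n : ℤ, ∑ i, mu i = (n : ℝ))}

/-- The simplex spanned by the given lattice points. -/
def simplexOf {d : ℕ} (v : Fin (d + 1) → Fin d → ℤ) : Set (Fin d → ℝ) :=
  convexHull ℝ (Set.range fun i => toReal (v i))

/-- The dual (polar) body `{y : ⟨x,y⟩ ≤ 1 ∀ x ∈ P}`. -/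
def polarDual {d : ℕ} (P : Set (Fin d → ℝ)) : Set (Fin d → ℝ) :=
  {y | ∀ x ∈ P, ∑ i, x i * y i ≤ 1}

/-- A point of `ℝ^d` is a lattice point if all its coordinates are integers. -/
def IsLatticePoint {d : ℕ} (x : Fin d → ℝ) : Prop := ∀ i, ∃ n : ℤ, x i = (n : ℝ)

/-- A polytope is reflexive if the origin is its unique interior lattice point and its
dual polytope is again a lattice polytope. -/
def IsReflexive {d : ℕ} (P : Set (Fin d → ℝ)) : Prop :=
  (0 ∈ interior P) ∧
  (∀ x ∈ interior P, IsLatticePoint x → x = 0) ∧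
  ∃ V : Finset (Fin d → ℤ), polarDual P = convexHull ℝ (toReal '' (V : Set (Fin d → ℤ)))

/-- A lattice polytope is Gorenstein of index `r` if some lattice translate of its
`r`-th dilate is reflexive. -/
def IsGorenstein {d : ℕ} (P : Set (Fin d → ℝ)) (r : ℕ) : Prop :=
  ∃ w : Fin d → ℤ, IsReflexive ((fun x => (r : ℝ) • x + toReal w) '' P)

/-- Unimodular equivalence of subsets of `ℝ^d`. -/
def UnimodEquiv {d : ℕ} (P Q : Set (Fin d → ℝ)) : Prop :=
  ∃ (U : Matrix (Fin d) (Fin d) ℤ) (w : Fin d → ℤ), IsUnit U.det ∧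
    Q = (fun x => fun j => (∑ i, x i * (U i j : ℝ)) + (w j : ℝ)) '' P

/-- `P` is a lattice pyramid: it is unimodularly equivalent to
`conv(V × {0}, e_j)` for a finite set `V` of lattice points lying in a coordinate
hyperplane. -/
def IsLatticePyramid {d : ℕ} (P : Set (Fin d → ℝ)) : Prop :=
  ∃ (j : Fin d) (V : Finset (Fin d → ℤ)),
    (∀ x ∈ V, x j = 0) ∧
    UnimodEquiv P (convexHull ℝ
      ((toReal '' (V : Set (Fin d → ℤ))) ∪ {fun i => if i = j then (1 : ℝ) else 0}))

/-- The vertices of the simplex `Δ(A)` associated to `A = (a 1, …, a d)`: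
`v 0 = 0`, `v i = e_i` for `1 ≤ i ≤ d-1`, and
`v d = ∑_{j=1}^{d-1} (a d - a j) e_j + (a d) e_d`. -/
def simplexVerts (d : ℕ) (a : ℕ → ℤ) : Fin (d + 1) → Fin d → ℤ := fun i j =>
  if (i : ℕ) = 0 then 0
  else if (i : ℕ) = d then (if (j : ℕ) = d - 1 then a d else a d - a ((j : ℕ) + 1))
  else if (j : ℕ) + 1 = (i : ℕ) then 1 else 0

/-- The vertices of the simplex `Δ(A,B)`: `v 0 = 0`, `v i = e_i` for
`i ∉ {0, s, d}`, `v s = ∑_{j=1}^s (a j) e_j`, `v d = ∑_{j=1}^d (b j) e_j`. -/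
def simplexVerts2 (d s : ℕ) (a b : ℕ → ℤ) : Fin (d + 1) → Fin d → ℤ := fun i j =>
  if (i : ℕ) = 0 then 0
  else if (i : ℕ) = s then (if (j : ℕ) + 1 ≤ s then a ((j : ℕ) + 1) else 0)
  else if (i : ℕ) = d then b ((j : ℕ) + 1)
  else if (j : ℕ) + 1 = (i : ℕ) then 1 else 0

-- helper: sum against a two-point-supported vector
lemma sum_mul_pair {d : ℕ} (c : Fin d → ℝ) (j1 j2 : Fin d) (h : j1 ≠ j2) (r1 r2 : ℝ) :
    ∑ j, c j * (if j = j1 then r1 else if j = j2 then r2 else 0)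
      = c j1 * r1 + c j2 * r2 := by
  classical
  have hpt : ∀ j, c j * (if j = j1 then r1 else if j = j2 then r2 else 0)
      = (if j = j1 then c j1 * r1 else 0) + (if j = j2 then c j2 * r2 else 0) := by
    intro j
    by_cases h1 : j = j1
    · subst h1; simp [h]
    · by_cases h2 : j = j2
      · subst h2; simp [h1]
      · simp [h1, h2]
  rw [Finset.sum_congr rfl (fun j _ => hpt j), Finset.sum_add_distrib,
    Finset.sum_ite_eq', Finset.sum_ite_eq']
  simp

lemma sum_mul_single {d : ℕ} (c : Fin d → ℝ) (j1 : Fin d) (r1 : ℝ) :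
    ∑ j, c j * (if j = j1 then r1 else 0) = c j1 * r1 := by
  classical
  have hpt : ∀ j, c j * (if j = j1 then r1 else 0) = (if j = j1 then c j1 * r1 else 0) := by
    intro j; by_cases h1 : j = j1 <;> simp [h1]
  rw [Finset.sum_congr rfl (fun j _ => hpt j), Finset.sum_ite_eq']
  simp

lemma key {d : ℕ} {Q : Set (Fin d → ℝ)} (h0 : 0 ∈ interior Q)
    {V : Finset (Fin d → ℤ)}
    (hPolar : polarDual Q = convexHull ℝ (toReal '' (V : Set (Fin d → ℤ))))
    (u : Fin d → ℝ) (j0 : Fin d) (hu : u j0 ≠ 0) (H : ℤ)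
    (hub : ∀ x ∈ Q, ∑ j, x j * u j ≤ (H : ℝ))
    (T : Finset (Fin (d+1))) (X : Fin (d+1) → Fin d → ℝ)
    (hXQ : ∀ i ∈ T, X i ∈ Q)
    (hXu : ∀ i ∈ T, ∑ j, X i j * u j = (H : ℝ))
    (huniq : (H : ℝ) ≠ 0 → ∀ y : Fin d → ℝ, (∀ i ∈ T, ∑ j, X i j * y j = 1) →
      y = fun j => u j / (H : ℝ)) :
    0 < H ∧ ∃ ζ : Fin d → ℤ, (fun j => u j / (H : ℝ)) = toReal ζ := by
  classical
  -- positivity of H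
  have hH0 : (0 : ℝ) < H := by
    obtain ⟨ε, hε, hball⟩ : ∃ ε > 0, Metric.ball (0 : Fin d → ℝ) ε ⊆ Q := by
      rw [mem_interior_iff_mem_nhds] at h0
      rcases Metric.mem_nhds_iff.mp h0 with ⟨ε, hε, hb⟩
      exact ⟨ε, hε, hb⟩
    set S2 : ℝ := ∑ j, u j * u j with hS2def
    have hS2 : 0 < S2 :=
      Finset.sum_pos' (fun j _ => mul_self_nonneg _)
        ⟨j0, Finset.mem_univ _, mul_self_pos.mpr hu⟩
    set δ : ℝ := ε / (2 * (‖u‖ + 1)) with hδdef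
    have hnu : (0:ℝ) ≤ ‖u‖ := norm_nonneg u
    have hδ : 0 < δ := by positivity
    have hmem : δ • u ∈ Q := by
      apply hball
      rw [Metric.mem_ball, dist_zero_right, norm_smul, Real.norm_eq_abs,
        abs_of_pos hδ]
      have : δ * ‖u‖ < δ * (2 * (‖u‖ + 1)) := by nlinarith
      calc δ * ‖u‖ < δ * (2 * (‖u‖ + 1)) := this
        _ = ε := by rw [hδdef]; exact div_mul_cancel₀ _ (by positivity)
    have hle := hub _ hmem
    have heq : ∑ j, (δ • u) j * u j = δ * S2 := by
      rw [hS2def, Finset.mul_sum]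
      exact Finset.sum_congr rfl fun j _ => by simp [mul_assoc]
    rw [heq] at hle
    nlinarith
  have HposZ : 0 < H := by exact_mod_cast hH0
  have hHne : (H : ℝ) ≠ 0 := ne_of_gt hH0
  set z : Fin d → ℝ := fun j => u j / (H : ℝ) with hz
  have hdotz : ∀ x : Fin d → ℝ, ∑ j, x j * z j = (∑ j, x j * u j) / (H : ℝ) := by
    intro x
    rw [Finset.sum_div]
    exact Finset.sum_congr rfl fun j _ => by rw [hz]; ring
  have hzpolar : z ∈ polarDual Q := by
    intro x hx
    rw [hdotz]
    exact (div_le_one hH0).mpr (hub x hx)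
  rw [hPolar] at hzpolar
  set S : Finset (Fin d → ℝ) := V.image toReal with hSdef
  have hScoe : (toReal '' (V : Set (Fin d → ℤ))) = (S : Set (Fin d → ℝ)) := by
    simp [hSdef, Finset.coe_image]
  rw [hScoe, Finset.convexHull_eq] at hzpolar
  obtain ⟨wt, hwt0, hwt1, hcm⟩ := hzpolar
  have hzsum : ∑ y ∈ S, wt y • y = z := by
    rw [← hcm, Finset.centerMass, hwt1]; simp
  -- the linear functional
  set φ : (Fin d → ℝ) →ₗ[ℝ] ℝ :=
    { toFun := fun y => ∑ i ∈ T, ∑ j, X i j * y j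
      map_add' := by
        intro y1 y2
        rw [← Finset.sum_add_distrib]
        refine Finset.sum_congr rfl fun i _ => ?_
        rw [← Finset.sum_add_distrib]
        exact Finset.sum_congr rfl fun j _ => by
          simp only [Pi.add_apply]; ring
      map_smul' := by
        intro c y
        simp only [smul_eq_mul, RingHom.id_apply]
        rw [Finset.mul_sum]
        refine Finset.sum_congr rfl fun i _ => ?_
        rw [Finset.mul_sum]
        exact Finset.sum_congr rfl fun j _ => by
          simp only [Pi.smul_apply, smul_eq_mul]; ring } with hφdef
  have hφapp : ∀ y, φ y = ∑ i ∈ T, ∑ j, X i j * y j := fun y => rfl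
  have hφz : φ z = (T.card : ℝ) := by
    have h1 : ∀ i ∈ T, ∑ j, X i j * z j = (1:ℝ) := by
      intro i hi
      rw [hdotz, hXu i hi, div_self hHne]
    rw [hφapp, Finset.sum_congr rfl h1]
    simp
  have hpolarmem : ∀ y ∈ S, y ∈ polarDual Q := by
    intro y hy
    rw [hPolar, hScoe]
    exact subset_convexHull ℝ _ hy
  have hφle : ∀ y ∈ S, φ y ≤ (T.card : ℝ) := by
    intro y hy
    rw [hφapp]
    calc ∑ i ∈ T, ∑ j, X i j * y j ≤ ∑ i ∈ T, (1:ℝ) :=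
          Finset.sum_le_sum fun i hi => hpolarmem y hy _ (hXQ i hi)
      _ = (T.card : ℝ) := by simp
  have hz2 : ∑ y ∈ S, wt y * φ y = (T.card : ℝ) := by
    rw [← hφz, ← hzsum, map_sum]
    exact Finset.sum_congr rfl fun y _ => by rw [_root_.map_smul]; simp
  have hkeyz : ∀ y ∈ S, wt y * ((T.card : ℝ) - φ y) = 0 := by
    have hsum0 : ∑ y ∈ S, wt y * ((T.card : ℝ) - φ y) = 0 := by
      have : ∑ y ∈ S, wt y * ((T.card : ℝ) - φ y)
          = (∑ y ∈ S, wt y) * (T.card : ℝ) - ∑ y ∈ S, wt y * φ y := by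
        rw [Finset.sum_mul, ← Finset.sum_sub_distrib]
        exact Finset.sum_congr rfl fun y _ => by ring
      rw [this, hwt1, hz2]; ring
    exact fun y hy => (Finset.sum_eq_zero_iff_of_nonneg
      (fun y hy => mul_nonneg (hwt0 y hy) (sub_nonneg.mpr (hφle y hy)))).mp hsum0 y hy
  obtain ⟨y0, hy0S, hy0pos⟩ : ∃ y0 ∈ S, 0 < wt y0 := by
    by_contra hcon
    push_neg at hcon
    have : ∑ y ∈ S, wt y = 0 :=
      Finset.sum_eq_zero fun y hy => le_antisymm (hcon y hy) (hwt0 y hy)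
    rw [hwt1] at this; norm_num at this
  have hφy0 : φ y0 = (T.card : ℝ) := by
    have := hkeyz y0 hy0S
    rcases mul_eq_zero.mp this with h | h
    · exact absurd h (ne_of_gt hy0pos)
    · linarith
  have heach : ∀ i ∈ T, ∑ j, X i j * y0 j = 1 := by
    have hsum : ∑ i ∈ T, ((1:ℝ) - ∑ j, X i j * y0 j) = 0 := by
      rw [Finset.sum_sub_distrib, ← hφapp, hφy0]; simp
    intro i hi
    have := (Finset.sum_eq_zero_iff_of_nonneg
      (fun i hi => sub_nonneg.mpr (hpolarmem y0 hy0S _ (hXQ i hi)))).mp hsum i hi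
    linarith
  have hy0z := huniq hHne y0 heach
  obtain ⟨ζ, hζV, hζ⟩ := Finset.mem_image.mp hy0S
  refine ⟨HposZ, ζ, ?_⟩
  rw [← hy0z]
  exact hζ.symm

set_option maxHeartbeats 2000000 in
/-- if `a s = p`, `b d = q` are primes and `Δ(A,B)` is Gorenstein of
index `r`, then `b s = 0` or `b s = q - 1`. -/
theorem statement12 (d s : ℕ) (hs : 1 ≤ s) (hsd : s < d)
    (p q r : ℕ) (hp : p.Prime) (hq : q.Prime) (hr : 1 ≤ r) (a b : ℕ → ℤ)
    (harange : ∀ i, 1 ≤ i → i ≤ s - 1 → 0 ≤ a i ∧ a i < (p : ℤ))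
    (hbrange : ∀ i, 1 ≤ i → i ≤ d - 1 → 0 ≤ b i ∧ b i < (q : ℤ))
    (has : a s = (p : ℤ)) (hbd : b d = (q : ℤ))
    (hG : IsGorenstein (simplexOf (simplexVerts2 d s a b)) r) :
    b s = 0 ∨ b s = (q : ℤ) - 1 := by
  classical
  obtain ⟨w, hrefl⟩ := hG
  obtain ⟨h0int, -, V, hPolar⟩ := hrefl
  have hd2 : 2 ≤ d := by omega
  have hqZ : (0:ℤ) < (q:ℤ) := by exact_mod_cast hq.pos
  have hpZ : (0:ℤ) < (p:ℤ) := by exact_mod_cast hp.pos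
  have hqR : (0:ℝ) < (q:ℝ) := by exact_mod_cast hq.pos
  have hpR : (0:ℝ) < (p:ℝ) := by exact_mod_cast hp.pos
  have hrR : (0:ℝ) < (r:ℝ) := by exact_mod_cast Nat.lt_of_lt_of_le Nat.zero_lt_one hr
  set v : Fin (d+1) → Fin d → ℤ := simplexVerts2 d s a b with hvdef
  obtain ⟨jS, hjSv⟩ : ∃ j : Fin d, (j : ℕ) = s - 1 := ⟨⟨s - 1, by omega⟩, rfl⟩
  obtain ⟨jD, hjDv⟩ : ∃ j : Fin d, (j : ℕ) = d - 1 := ⟨⟨d - 1, by omega⟩, rfl⟩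
  have hjS1 : (jS : ℕ) + 1 = s := by rw [hjSv]; omega
  have hjD1 : (jD : ℕ) + 1 = d := by rw [hjDv]; omega
  have hjSne : jS ≠ jD := by
    intro h
    have : (jS : ℕ) = (jD : ℕ) := congrArg Fin.val h
    rw [hjSv, hjDv] at this; omega
  obtain ⟨iS, hiSv⟩ : ∃ i : Fin (d+1), (i : ℕ) = s := ⟨⟨s, by omega⟩, rfl⟩
  obtain ⟨iD, hiDv⟩ : ∃ i : Fin (d+1), (i : ℕ) = d := ⟨⟨d, by omega⟩, rfl⟩
  obtain ⟨i0, hi0v⟩ : ∃ i : Fin (d+1), (i : ℕ) = 0 := ⟨⟨0, by omega⟩, rfl⟩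
  have hvcoord : ∀ (i : Fin (d+1)) (j : Fin d), v i j =
      if (i:ℕ) = 0 then 0
      else if (i:ℕ) = s then (if (j:ℕ) + 1 ≤ s then a ((j:ℕ)+1) else 0)
      else if (i:ℕ) = d then b ((j:ℕ)+1)
      else if (j:ℕ) + 1 = (i:ℕ) then 1 else 0 := fun i j => rfl
  -- vertex coordinate evaluations
  have hv0 : ∀ j, v i0 j = 0 := by
    intro j; rw [hvcoord, hi0v, if_pos rfl]
  have hviSj : ∀ j : Fin d, v iS j = (if (j:ℕ) + 1 ≤ s then a ((j:ℕ)+1) else 0) := by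
    intro j; rw [hvcoord, hiSv, if_neg (by omega), if_pos rfl]
  have hviSjS : v iS jS = (p:ℤ) := by
    rw [hviSj, if_pos (by omega), hjS1, has]
  have hviSjD : v iS jD = 0 := by
    rw [hviSj, if_neg (by rw [hjD1]; omega)]
  have hviDj : ∀ j : Fin d, v iD j = b ((j:ℕ)+1) := by
    intro j; rw [hvcoord, hiDv, if_neg (by omega), if_neg (by omega), if_pos rfl]
  have hviDjS : v iD jS = b s := by rw [hviDj, hjS1]
  have hviDjD : v iD jD = (q:ℤ) := by rw [hviDj, hjD1, hbd]
  have hmid : ∀ i : Fin (d+1), (i:ℕ) ≠ 0 → (i:ℕ) ≠ s → (i:ℕ) ≠ d →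
      ∀ j : Fin d, v i j = (if (j:ℕ) + 1 = (i:ℕ) then 1 else 0) := by
    intro i h1 h2 h3 j
    rw [hvcoord, if_neg h1, if_neg h2, if_neg h3]
  have hmidjS : ∀ i : Fin (d+1), (i:ℕ) ≠ 0 → (i:ℕ) ≠ s → (i:ℕ) ≠ d → v i jS = 0 := by
    intro i h1 h2 h3
    rw [hmid i h1 h2 h3, if_neg (by rw [hjS1]; omega)]
  have hmidjD : ∀ i : Fin (d+1), (i:ℕ) ≠ 0 → (i:ℕ) ≠ s → (i:ℕ) ≠ d → v i jD = 0 := by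
    intro i h1 h2 h3
    rw [hmid i h1 h2 h3, if_neg (by rw [hjD1]; omega)]
  -- affine expansion
  have haff : ∀ (t y : Fin d → ℝ),
      ∑ j, ((r:ℝ) • t + toReal w) j * y j
        = (r:ℝ) * (∑ j, t j * y j) + ∑ j, ((w j : ℤ):ℝ) * y j := by
    intro t y
    rw [Finset.mul_sum, ← Finset.sum_add_distrib]
    refine Finset.sum_congr rfl fun j _ => ?_
    simp only [Pi.add_apply, Pi.smul_apply, smul_eq_mul, toReal]
    ring
  -- bound on the simplex
  have hPt : ∀ (u : Fin d → ℝ), (∀ i, ∑ j, ((v i j : ℤ):ℝ) * u j ≤ 0) →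
      ∀ t ∈ simplexOf v, ∑ j, t j * u j ≤ 0 := by
    intro u hvt t ht
    have hlin : IsLinearMap ℝ (fun t : Fin d → ℝ => ∑ j, t j * u j) := by
      constructor
      · intro y1 y2
        rw [← Finset.sum_add_distrib]
        exact Finset.sum_congr rfl fun j _ => by simp only [Pi.add_apply]; ring
      · intro c y
        simp only [smul_eq_mul]
        rw [Finset.mul_sum]
        exact Finset.sum_congr rfl fun j _ => by
          simp only [Pi.smul_apply, smul_eq_mul]; ring
    have hconv : Convex ℝ {t : Fin d → ℝ | ∑ j, t j * u j ≤ 0} :=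
      convex_halfSpace_le hlin 0
    exact convexHull_min (by rintro x ⟨i, rfl⟩; exact hvt i) hconv ht
  -- the points X i
  set X : Fin (d+1) → Fin d → ℝ := fun i => (r:ℝ) • toReal (v i) + toReal w with hXdef
  set Q : Set (Fin d → ℝ) := (fun x => (r : ℝ) • x + toReal w) '' simplexOf v with hQdef
  have hXQ : ∀ i, X i ∈ Q := by
    intro i
    exact ⟨toReal (v i), subset_convexHull ℝ _ ⟨i, rfl⟩, rfl⟩
  have hXdot : ∀ (i : Fin (d+1)) (y : Fin d → ℝ),
      ∑ j, X i j * y j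
        = (r:ℝ) * (∑ j, ((v i j : ℤ):ℝ) * y j) + ∑ j, ((w j : ℤ):ℝ) * y j := by
    intro i y
    rw [hXdef]
    exact haff (toReal (v i)) y
  -- bound on Q
  have hQb : ∀ (u : Fin d → ℝ) (H : ℤ), (∀ i, ∑ j, ((v i j : ℤ):ℝ) * u j ≤ 0) →
      (∑ j, ((w j : ℤ):ℝ) * u j = (H:ℝ)) → ∀ x ∈ Q, ∑ j, x j * u j ≤ (H:ℝ) := by
    rintro u H hvt hwu x ⟨t, ht, rfl⟩
    show ∑ j, ((r:ℝ) • t + toReal w) j * u j ≤ (H:ℝ)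
    rw [haff t u, hwu]
    have h1 := hPt u hvt t ht
    nlinarith [hrR]
  -- structure of y from the facet equations
  have hXeqs : ∀ (y : Fin d → ℝ) (T : Finset (Fin (d+1))), i0 ∈ T →
      (∀ i ∈ T, ∑ j, X i j * y j = 1) →
      (∑ j, ((w j : ℤ):ℝ) * y j = 1) ∧
      (∀ i ∈ T, ∑ j, ((v i j : ℤ):ℝ) * y j = 0) := by
    intro y T h0T hy
    have hbase : ∑ j, ((w j : ℤ):ℝ) * y j = 1 := by
      have h1 := hy i0 h0T
      rw [hXdot] at h1
      have h2 : ∑ j, ((v i0 j : ℤ):ℝ) * y j = 0 := by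
        refine Finset.sum_eq_zero fun j _ => ?_
        rw [hv0 j]; simp
      rw [h2] at h1; linarith
    refine ⟨hbase, fun i hi => ?_⟩
    have h1 := hy i hi
    rw [hXdot, hbase] at h1
    have h2 : (r:ℝ) * (∑ j, ((v i j : ℤ):ℝ) * y j) = 0 := by linarith
    exact (mul_eq_zero.mp h2).resolve_left (ne_of_gt hrR)
  -- vanishing off jS, jD
  have hyoff : ∀ (y : Fin d → ℝ),
      (∀ i : Fin (d+1), (i:ℕ) ≠ 0 → (i:ℕ) ≠ s → (i:ℕ) ≠ d →
        ∑ j, ((v i j : ℤ):ℝ) * y j = 0) →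
      ∀ j : Fin d, j ≠ jS → j ≠ jD → y j = 0 := by
    intro y hvan j hjs hjd
    have hjval : (j:ℕ) ≠ s - 1 := fun h => hjs (Fin.ext (by rw [h, hjSv]))
    have hjval' : (j:ℕ) ≠ d - 1 := fun h => hjd (Fin.ext (by rw [h, hjDv]))
    have hjlt : (j:ℕ) < d := j.isLt
    set i : Fin (d+1) := ⟨(j:ℕ)+1, by omega⟩ with hidef
    have hiv : (i:ℕ) = (j:ℕ)+1 := rfl
    have hi0' : (i:ℕ) ≠ 0 := by omega
    have his : (i:ℕ) ≠ s := by rw [hiv]; omega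
    have hid : (i:ℕ) ≠ d := by rw [hiv]; omega
    have hvan' := hvan i hi0' his hid
    have hsum : ∑ j', ((v i j' : ℤ):ℝ) * y j' = y j := by
      rw [Finset.sum_eq_single j]
      · rw [hmid i hi0' his hid, if_pos (by rw [hiv]), Int.cast_one, one_mul]
      · intro j' _ hj'
        have : (j':ℕ) + 1 ≠ (i:ℕ) := by
          rw [hiv]
          intro h
          exact hj' (Fin.ext (by omega))
        rw [hmid i hi0' his hid, if_neg this, Int.cast_zero, zero_mul]
      · intro h; exact absurd (Finset.mem_univ j) h
    rw [hsum] at hvan'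
    exact hvan'
  -- pair sum reduction
  have hpair : ∀ (y : Fin d → ℝ), (∀ j : Fin d, j ≠ jS → j ≠ jD → y j = 0) →
      ∀ c : Fin d → ℝ, ∑ j, c j * y j = c jS * y jS + c jD * y jD := by
    intro y hy c
    have hvan : ∀ x ∈ Finset.univ, x ∉ ({jS, jD} : Finset (Fin d)) → c x * y x = 0 := by
      intro j _ hj
      simp only [Finset.mem_insert, Finset.mem_singleton, not_or] at hj
      rw [hy j hj.1 hj.2, mul_zero]
    rw [← Finset.sum_subset (Finset.subset_univ ({jS, jD} : Finset (Fin d))) hvan,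
      Finset.sum_pair hjSne]
  ----------------------------------------------------------------
  -- FIRST APPLICATION: facet opposite v_d, u' = -e_{jD}
  ----------------------------------------------------------------
  set u1 : Fin d → ℝ := fun j => if j = jD then (-1:ℝ) else 0 with hu1def
  have hdotu1 : ∀ c : Fin d → ℝ, ∑ j, c j * u1 j = c jD * (-1) := by
    intro c
    simp only [hu1def]
    exact sum_mul_single c jD (-1)
  set H1 : ℤ := -(w jD) with hH1def
  have hvu1_eq : ∀ i : Fin (d+1), (i:ℕ) ≠ d → ∑ j, ((v i j : ℤ):ℝ) * u1 j = 0 := by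
    intro i hid
    rw [hdotu1]
    by_cases h0 : (i:ℕ) = 0
    · have : i = i0 := Fin.ext (by rw [h0, hi0v])
      rw [this, hv0]; simp
    · by_cases hsi : (i:ℕ) = s
      · have : i = iS := Fin.ext (by rw [hsi, hiSv])
        rw [this, hviSjD]; simp
      · rw [hmidjD i h0 hsi hid]; simp
  have hvu1_le : ∀ i : Fin (d+1), ∑ j, ((v i j : ℤ):ℝ) * u1 j ≤ 0 := by
    intro i
    by_cases hid : (i:ℕ) = d
    · have : i = iD := Fin.ext (by rw [hid, hiDv])
      rw [this, hdotu1, hviDjD]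
      push_cast; nlinarith
    · rw [hvu1_eq i hid]
  have hwu1 : ∑ j, ((w j : ℤ):ℝ) * u1 j = (H1:ℝ) := by
    rw [hdotu1, hH1def]; push_cast; ring
  set T1 : Finset (Fin (d+1)) := Finset.univ.filter (fun i => (i:ℕ) ≠ d) with hT1def
  have h0T1 : i0 ∈ T1 := by
    rw [hT1def]; simp only [Finset.mem_filter, Finset.mem_univ, true_and]
    rw [hi0v]; omega
  have hmemT1 : ∀ i : Fin (d+1), i ∈ T1 ↔ (i:ℕ) ≠ d := by
    intro i; rw [hT1def]; simp
  have huniq1 : (H1:ℝ) ≠ 0 → ∀ y : Fin d → ℝ, (∀ i ∈ T1, ∑ j, X i j * y j = 1) →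
      y = fun j => u1 j / (H1:ℝ) := by
    intro hHne y hy
    obtain ⟨hw1, hvy⟩ := hXeqs y T1 h0T1 hy
    have hvanmid : ∀ i : Fin (d+1), (i:ℕ) ≠ 0 → (i:ℕ) ≠ s → (i:ℕ) ≠ d →
        ∑ j, ((v i j : ℤ):ℝ) * y j = 0 := by
      intro i h1 h2 h3
      exact hvy i ((hmemT1 i).mpr h3)
    have hoff := hyoff y hvanmid
    have hiST1 : iS ∈ T1 := (hmemT1 iS).mpr (by rw [hiSv]; omega)
    have hvSy := hvy iS hiST1
    rw [hpair y hoff] at hvSy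
    rw [hviSjS, hviSjD] at hvSy
    have hyS : y jS = 0 := by
      have : (p:ℝ) * y jS = 0 := by push_cast at hvSy ⊢; linarith
      exact (mul_eq_zero.mp this).resolve_left (ne_of_gt hpR)
    rw [hpair y hoff] at hw1
    rw [hyS, mul_zero, zero_add] at hw1
    have hwjD : ((w jD : ℤ):ℝ) ≠ 0 := by
      intro h
      rw [h, zero_mul] at hw1
      norm_num at hw1
    funext j
    show y j = u1 j / (H1:ℝ)
    by_cases hjd : j = jD
    · rw [hjd]
      have hu1jD : u1 jD = -1 := by rw [hu1def]; simp
      rw [hu1jD]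
      have hH1R : (H1:ℝ) = -((w jD : ℤ):ℝ) := by rw [hH1def]; push_cast; ring
      rw [hH1R]
      field_simp
      linarith [hw1]
    · by_cases hjs : j = jS
      · rw [hjs]
        have : u1 jS = 0 := by rw [hu1def]; simp [hjSne]
        rw [this, zero_div]
        exact hyS
      · have : u1 j = 0 := by rw [hu1def]; simp [hjd]
        rw [this, zero_div]
        exact hoff j hjs hjd
  have hkey1 := key h0int hPolar u1 jD (by rw [hu1def]; simp) H1
    (hQb u1 H1 hvu1_le hwu1) T1 X (fun i _ => hXQ i)
    (fun i hi => by
      rw [hXdot, hvu1_eq i ((hmemT1 i).mp hi), hwu1]; ring)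
    huniq1
  obtain ⟨hH1pos, ζ1, hζ1⟩ := hkey1
  have hζ1D : u1 jD / (H1:ℝ) = ((ζ1 jD : ℤ):ℝ) := congrFun hζ1 jD
  have hu1jD : u1 jD = -1 := by rw [hu1def]; simp
  have hH1ne : (H1:ℝ) ≠ 0 := by exact_mod_cast ne_of_gt hH1pos
  have hζ1int : ζ1 jD * H1 = -1 := by
    have : ((ζ1 jD : ℤ):ℝ) * (H1:ℝ) = -1 := by
      rw [← hζ1D, hu1jD]; field_simp
    exact_mod_cast this
  have hH1one : H1 = 1 := by
    have hdvd : H1 ∣ 1 := ⟨-(ζ1 jD), by linear_combination hζ1int⟩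
    have := Int.le_of_dvd one_pos hdvd
    omega
  have hwjD : w jD = -1 := by rw [hH1def] at hH1one; omega
  ----------------------------------------------------------------
  -- SECOND APPLICATION: facet opposite v_s
  ----------------------------------------------------------------
  set u2 : Fin d → ℝ := fun j => if j = jS then -(q:ℝ) else if j = jD then ((b s : ℤ):ℝ) else 0
    with hu2def
  have hdotu2 : ∀ c : Fin d → ℝ, ∑ j, c j * u2 j = c jS * (-(q:ℝ)) + c jD * ((b s : ℤ):ℝ) := by
    intro c
    simp only [hu2def]
    exact sum_mul_pair c jS jD hjSne _ _
  set H2 : ℤ := -(q:ℤ) * w jS + b s * w jD with hH2def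
  have hwu2 : ∑ j, ((w j : ℤ):ℝ) * u2 j = (H2:ℝ) := by
    rw [hdotu2, hH2def]; push_cast; ring
  have hvu2_eq : ∀ i : Fin (d+1), (i:ℕ) ≠ s → ∑ j, ((v i j : ℤ):ℝ) * u2 j = 0 := by
    intro i his
    rw [hdotu2]
    by_cases h0 : (i:ℕ) = 0
    · have : i = i0 := Fin.ext (by rw [h0, hi0v])
      rw [this, hv0, hv0]; simp
    · by_cases hid : (i:ℕ) = d
      · have : i = iD := Fin.ext (by rw [hid, hiDv])
        rw [this, hviDjS, hviDjD]
        push_cast; ring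
      · rw [hmidjS i h0 his hid, hmidjD i h0 his hid]; simp
  have hvu2_le : ∀ i : Fin (d+1), ∑ j, ((v i j : ℤ):ℝ) * u2 j ≤ 0 := by
    intro i
    by_cases his : (i:ℕ) = s
    · have : i = iS := Fin.ext (by rw [his, hiSv])
      rw [this, hdotu2, hviSjS, hviSjD]
      push_cast
      nlinarith
    · rw [hvu2_eq i his]
  set T2 : Finset (Fin (d+1)) := Finset.univ.filter (fun i => (i:ℕ) ≠ s) with hT2def
  have hmemT2 : ∀ i : Fin (d+1), i ∈ T2 ↔ (i:ℕ) ≠ s := by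
    intro i; rw [hT2def]; simp
  have h0T2 : i0 ∈ T2 := (hmemT2 i0).mpr (by rw [hi0v]; omega)
  have huniq2 : (H2:ℝ) ≠ 0 → ∀ y : Fin d → ℝ, (∀ i ∈ T2, ∑ j, X i j * y j = 1) →
      y = fun j => u2 j / (H2:ℝ) := by
    intro hHne y hy
    obtain ⟨hw1, hvy⟩ := hXeqs y T2 h0T2 hy
    have hvanmid : ∀ i : Fin (d+1), (i:ℕ) ≠ 0 → (i:ℕ) ≠ s → (i:ℕ) ≠ d →
        ∑ j, ((v i j : ℤ):ℝ) * y j = 0 := by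
      intro i h1 h2 h3
      exact hvy i ((hmemT2 i).mpr h2)
    have hoff := hyoff y hvanmid
    have hiDT2 : iD ∈ T2 := (hmemT2 iD).mpr (by rw [hiDv]; omega)
    have hvDy := hvy iD hiDT2
    rw [hpair y hoff, hviDjS, hviDjD] at hvDy
    rw [hpair y hoff] at hw1
    have hH2R : (H2:ℝ) = -(q:ℝ) * ((w jS : ℤ):ℝ) + ((b s : ℤ):ℝ) * ((w jD : ℤ):ℝ) := by
      rw [hH2def]; push_cast; ring
    have hqne : (q:ℝ) ≠ 0 := ne_of_gt hqR
    have hyS : y jS * (H2:ℝ) = -(q:ℝ) := by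
      rw [hH2R]
      push_cast at hvDy hw1 ⊢
      linear_combination (-(q:ℝ)) * hw1 + ((w jD : ℤ):ℝ) * hvDy
    have hyD : y jD * (H2:ℝ) = ((b s : ℤ):ℝ) := by
      rw [hH2R]
      push_cast at hvDy hw1 ⊢
      linear_combination ((b s : ℤ):ℝ) * hw1 - ((w jS : ℤ):ℝ) * hvDy
    funext j
    show y j = u2 j / (H2:ℝ)
    by_cases hjs : j = jS
    · rw [hjs]
      have : u2 jS = -(q:ℝ) := by rw [hu2def]; simp
      rw [this, eq_div_iff hHne]
      exact hyS
    · by_cases hjd : j = jD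
      · rw [hjd]
        have : u2 jD = ((b s : ℤ):ℝ) := by rw [hu2def]; simp [Ne.symm hjSne]
        rw [this, eq_div_iff hHne]
        exact hyD
      · have : u2 j = 0 := by rw [hu2def]; simp [hjs, hjd]
        rw [this, zero_div]
        exact hoff j hjs hjd
  have hkey2 := key h0int hPolar u2 jS
    (by rw [hu2def]; simp [hqR.ne']) H2
    (hQb u2 H2 hvu2_le hwu2) T2 X (fun i _ => hXQ i)
    (fun i hi => by
      rw [hXdot, hvu2_eq i ((hmemT2 i).mp hi), hwu2]; ring)
    huniq2
  obtain ⟨hH2pos, ζ2, hζ2⟩ := hkey2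
  have hH2ne : (H2:ℝ) ≠ 0 := by exact_mod_cast ne_of_gt hH2pos
  have hζ2S : ζ2 jS * H2 = -(q:ℤ) := by
    have h1 : u2 jS / (H2:ℝ) = ((ζ2 jS : ℤ):ℝ) := congrFun hζ2 jS
    have h2 : u2 jS = -(q:ℝ) := by rw [hu2def]; simp
    rw [h2] at h1
    have : ((ζ2 jS : ℤ):ℝ) * (H2:ℝ) = -(q:ℝ) := by
      rw [← h1]; field_simp
    exact_mod_cast this
  have hζ2D : ζ2 jD * H2 = b s := by
    have h1 : u2 jD / (H2:ℝ) = ((ζ2 jD : ℤ):ℝ) := congrFun hζ2 jD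
    have h2 : u2 jD = ((b s : ℤ):ℝ) := by rw [hu2def]; simp [Ne.symm hjSne]
    rw [h2] at h1
    have : ((ζ2 jD : ℤ):ℝ) * (H2:ℝ) = ((b s : ℤ):ℝ) := by
      rw [← h1]; field_simp
    exact_mod_cast this
  ----------------------------------------------------------------
  -- number theory finish
  ----------------------------------------------------------------
  by_cases hbs0 : b s = 0
  · exact Or.inl hbs0
  right
  have hbrs := hbrange s hs (by omega)
  have hbspos : 0 < b s := lt_of_le_of_ne hbrs.1 (Ne.symm hbs0)
  have hbslt : b s < (q:ℤ) := hbrs.2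
  have hdvd_b : H2 ∣ b s := ⟨ζ2 jD, by rw [mul_comm]; exact hζ2D.symm⟩
  have hdvd_q : H2 ∣ (q:ℤ) := ⟨-(ζ2 jS), by rw [mul_comm, neg_mul, hζ2S, neg_neg]⟩
  have hle : H2 ≤ b s := Int.le_of_dvd hbspos hdvd_b
  have hnat : H2.natAbs ∣ q := by
    have := Int.natAbs_dvd_natAbs.mpr hdvd_q
    simpa using this
  have habs : (H2.natAbs : ℤ) = H2 := Int.natAbs_of_nonneg (le_of_lt hH2pos)
  rcases hq.eq_one_or_self_of_dvd _ hnat with h1 | hq'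
  · have hH2one : H2 = 1 := by omega
    rw [hH2def, hwjD] at hH2one
    -- -(q) * w jS + b s * (-1) = 1
    set k : ℤ := -(w jS) with hkdef
    have hk : (q:ℤ) * k = b s + 1 := by rw [hkdef]; linear_combination hH2one
    have hkpos : 0 < k := by
      rcases le_or_gt k 0 with h | h
      · exfalso
        have h2 : (q:ℤ) * k ≤ 0 := mul_nonpos_of_nonneg_of_nonpos hqZ.le h
        rw [hk] at h2
        omega
      · exact h
    have hkle : k ≤ 1 := by
      by_contra hcon
      push_neg at hcon
      have h2 : (q:ℤ) * 2 ≤ (q:ℤ) * k := by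
        apply mul_le_mul_of_nonneg_left _ hqZ.le
        omega
      rw [hk] at h2
      omega
    have hk1 : k = 1 := by omega
    rw [hk1, mul_one] at hk
    omega
  · exfalso
    have : H2 = (q:ℤ) := by omega
    omega
end
end

section
/- Let p ≠ q be primes, a_s = p, b_d = q, a_i = p−1 for 1 ≤ i ≤ s−1, b_i = 0 for 1 ≤ i ≤ s, b_i = q−1 for s+1 ≤ i ≤ d−1, and suppose k = rpq − p(d−s) − qs ∈ {p, q}. Then Δ(A,B) is Gorenstein of index r, i.e., r·Δ(A,B) − (1,…,1) is reflexive. -/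
open scoped BigOperators
open MeasureTheory

noncomputable section

set_option linter.unreachableTactic false
set_option linter.unusedTactic false
set_option linter.unusedVariables false

open Finset

set_option linter.unreachableTactic false
set_option linter.unusedTactic false
set_option linter.unusedVariables false

open Finset

namespace St13

def chiI (m t : ℕ) : ℤ := if t = m then 1 else 0

def Urow (s d p q : ℕ) (c e f : ℤ) (k t : ℕ) : ℤ :=
  if k = 0 then (if t = s then e else if t = d then f else c)
  else if k = s then -chiI s t
  else if k = d then -chiI d t
  else if k < s then -(p:ℤ) * chiI k t + ((p:ℤ) - 1) * chiI s t
  else -(q:ℤ) * chiI k t + ((q:ℤ) - 1) * chiI d t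

def Vrow (s d p q : ℕ) (k t : ℕ) : ℤ :=
  if k = 0 then 0
  else if k = s then (if t < s then (p:ℤ) - 1 else if t = s then (p:ℤ) else 0)
  else if k = d then (if t ≤ s then 0 else if t < d then (q:ℤ) - 1 else if t = d then (q:ℤ) else 0)
  else chiI k t

def muRow (s : ℕ) (p q : ℕ) (K : ℤ) (k : ℕ) : ℤ :=
  if k = 0 then K else if k ≤ s then (q:ℤ) else (p:ℤ)

def gRow (s : ℕ) (p q r : ℕ) (c : ℤ) (k : ℕ) : ℤ :=
  if k = 0 then (r:ℤ) * c else if k ≤ s then (r:ℤ) * (p:ℤ) else (r:ℤ) * (q:ℤ)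

lemma sumFin (d : ℕ) (g : ℕ → ℤ) :
    ∑ j : Fin d, g ((j:ℕ)+1) = ∑ t ∈ Finset.Ico 1 (d+1), g t := by
  rw [Finset.sum_Ico_eq_sum_range]
  simp only [Nat.add_sub_cancel]
  rw [← Fin.sum_univ_eq_sum_range (fun t => g (1 + t)) d]
  exact Finset.sum_congr rfl fun j _ => by rw [Nat.add_comm]

lemma sumIcoSingleton (m : ℕ) (g : ℕ → ℤ) : ∑ t ∈ Finset.Ico m (m+1), g t = g m := by
  rw [Finset.sum_Ico_eq_sum_range]; simp

lemma splitIco (a m b : ℕ) (ham : a ≤ m) (hmb : m ≤ b) (g : ℕ → ℤ) :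
    ∑ t ∈ Finset.Ico a b, g t = ∑ t ∈ Finset.Ico a m, g t + ∑ t ∈ Finset.Ico m b, g t :=
  (Finset.sum_Ico_consecutive g ham hmb).symm

lemma splitj (d s : ℕ) (hs : 1 ≤ s) (hsd : s < d) (g : ℕ → ℤ) :
    ∑ t ∈ Finset.Ico 1 (d+1), g t
      = (∑ t ∈ Finset.Ico 1 s, g t) + g s + (∑ t ∈ Finset.Ico (s+1) d, g t) + g d := by
  rw [splitIco 1 s (d+1) hs (by omega), splitIco s (s+1) (d+1) (by omega) (by omega),
    splitIco (s+1) d (d+1) (by omega) (by omega), sumIcoSingleton s g,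
    show d + 1 = d + (1:ℕ) from rfl, sumIcoSingleton d g]
  ring

lemma splitk (d s : ℕ) (hs : 1 ≤ s) (hsd : s < d) (g : ℕ → ℤ) :
    ∑ t ∈ Finset.range (d+1), g t
      = g 0 + (∑ t ∈ Finset.Ico 1 s, g t) + g s + (∑ t ∈ Finset.Ico (s+1) d, g t) + g d := by
  rw [Finset.range_eq_Ico, splitIco 0 1 (d+1) (by omega) (by omega),
    show (1:ℕ) = 0 + 1 from rfl, sumIcoSingleton 0 g]
  rw [show (0:ℕ) + 1 = 1 from rfl, splitj d s hs hsd g]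
  ring

lemma IcoConst {a b : ℕ} (hab : a ≤ b) (z : ℤ) (g : ℕ → ℤ) (h : ∀ t, a ≤ t → t < b → g t = z) :
    ∑ t ∈ Finset.Ico a b, g t = ((b:ℤ) - (a:ℤ)) * z := by
  rw [Finset.sum_congr rfl (fun t ht => h t (Finset.mem_Ico.mp ht).1 (Finset.mem_Ico.mp ht).2)]
  rw [Finset.sum_const, Nat.card_Ico, nsmul_eq_mul]
  have : ((b - a : ℕ) : ℤ) = (b:ℤ) - (a:ℤ) := by omega
  rw [this]

lemma IcoPoint {a b m : ℕ} (hm1 : a ≤ m) (hm2 : m < b) (g : ℕ → ℤ)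
    (h : ∀ t, a ≤ t → t < b → t ≠ m → g t = 0) :
    ∑ t ∈ Finset.Ico a b, g t = g m :=
  Finset.sum_eq_single_of_mem m (Finset.mem_Ico.mpr ⟨hm1, hm2⟩)
    (fun t ht hne => h t (Finset.mem_Ico.mp ht).1 (Finset.mem_Ico.mp ht).2 hne)

section core

variable {d s p q r : ℕ} {c e f K : ℤ}

set_option maxHeartbeats 2000000 in
lemma sumU (hs : 1 ≤ s) (hsd : s < d) (hp : 0 < p) (hq : 0 < q)
    (hcK : c * K = (p:ℤ) * q)
    (hKs : K + (q:ℤ)*(s:ℤ) + (p:ℤ)*((d:ℤ)-(s:ℤ)) = (r:ℤ)*(p:ℤ)*(q:ℤ))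
    (hpe : (p:ℤ)*e = c*((s:ℤ) + (p:ℤ) - (s:ℤ)*(p:ℤ)))
    (hqf : (q:ℤ)*f = c*((d:ℤ) - (s:ℤ) + (q:ℤ)*(1 + (s:ℤ) - (d:ℤ))))
    (k : ℕ) (hk : k ≤ d) :
    ∑ t ∈ Finset.Ico 1 (d+1), Urow s d p q c e f k t
      = if k = 0 then (r:ℤ)*c - 1 else -1 := by
  rw [splitj d s hs hsd]
  rcases Nat.lt_or_ge k 1 with hk0 | hk1
  · have hk' : k = 0 := by omega
    subst hk'
    rw [IcoConst hs c _ (fun t h1 h2 => by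
        simp only [Urow, chiI]; split_ifs <;> (first | omega | ring)),
      IcoConst (by omega : s+1 ≤ d) c _ (fun t h1 h2 => by
        simp only [Urow, chiI]; split_ifs <;> (first | omega | ring))]
    have e1 : Urow s d p q c e f 0 s = e := by
      simp only [Urow, chiI]; split_ifs <;> (first | omega | ring)
    have e2 : Urow s d p q c e f 0 d = f := by
      simp only [Urow, chiI]; split_ifs <;> (first | omega | ring)
    rw [e1, e2, if_pos rfl]
    have hpq0 : (p:ℤ)*(q:ℤ) ≠ 0 := by positivity
    apply mul_left_cancel₀ hpq0
    push_cast
    linear_combination (q:ℤ)*hpe + (p:ℤ)*hqf + c*hKs - hcK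
  · rw [if_neg (by omega)]
    rcases Nat.lt_or_ge k s with hks | hks
    · rw [IcoPoint hk1 hks _ (fun t h1 h2 hne => by
          simp only [Urow, chiI]; split_ifs <;> (first | omega | ring)),
        IcoConst (by omega : s+1 ≤ d) 0 _ (fun t h1 h2 => by
          simp only [Urow, chiI]; split_ifs <;> (first | omega | ring))]
      have e1 : Urow s d p q c e f k k = -(p:ℤ) := by
        simp only [Urow, chiI]; split_ifs <;> (first | omega | ring)
      have e2 : Urow s d p q c e f k s = (p:ℤ) - 1 := by
        simp only [Urow, chiI]; split_ifs <;> (first | omega | ring)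
      have e3 : Urow s d p q c e f k d = 0 := by
        simp only [Urow, chiI]; split_ifs <;> (first | omega | ring)
      rw [e1, e2, e3]; ring
    · rcases Nat.eq_or_lt_of_le hks with hks' | hks'
      · have hk' : k = s := hks'.symm
        rw [IcoConst hs 0 _ (fun t h1 h2 => by
            simp only [Urow, chiI]; split_ifs <;> (first | omega | ring)),
          IcoConst (by omega : s+1 ≤ d) 0 _ (fun t h1 h2 => by
            simp only [Urow, chiI]; split_ifs <;> (first | omega | ring))]
        have e1 : Urow s d p q c e f k s = -1 := by
          simp only [Urow, chiI]; split_ifs <;> (first | omega | ring)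
        have e2 : Urow s d p q c e f k d = 0 := by
          simp only [Urow, chiI]; split_ifs <;> (first | omega | ring)
        rw [e1, e2]; ring
      · rcases Nat.lt_or_ge k d with hkd | hkd
        · rw [IcoConst hs 0 _ (fun t h1 h2 => by
              simp only [Urow, chiI]; split_ifs <;> (first | omega | ring)),
            IcoPoint (by omega : s+1 ≤ k) hkd _ (fun t h1 h2 hne => by
              simp only [Urow, chiI]; split_ifs <;> (first | omega | ring))]
          have e1 : Urow s d p q c e f k s = 0 := by
            simp only [Urow, chiI]; split_ifs <;> (first | omega | ring)
          have e2 : Urow s d p q c e f k k = -(q:ℤ) := by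
            simp only [Urow, chiI]; split_ifs <;> (first | omega | ring)
          have e3 : Urow s d p q c e f k d = (q:ℤ) - 1 := by
            simp only [Urow, chiI]; split_ifs <;> (first | omega | ring)
          rw [e1, e2, e3]; ring
        · have hk' : k = d := by omega
          rw [IcoConst hs 0 (fun t => Urow s d p q c e f k t) (fun t h1 h2 => by
              simp only [Urow, chiI]; split_ifs <;> (first | omega | ring)),
            IcoConst (by omega : s+1 ≤ d) 0 (fun t => Urow s d p q c e f k t) (fun t h1 h2 => by
              simp only [Urow, chiI]; split_ifs <;> (first | omega | ring))]
          have e1 : Urow s d p q c e f k s = 0 := by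
            simp only [Urow, chiI]; split_ifs <;> (first | omega | ring)
          have e2 : Urow s d p q c e f k d = -1 := by
            simp only [Urow, chiI]; split_ifs <;> (first | omega | ring)
          rw [e1, e2]; ring


set_option maxHeartbeats 4000000 in
lemma sumVU (hs : 1 ≤ s) (hsd : s < d) (hp : 0 < p) (hq : 0 < q)
    (hpe : (p:ℤ)*e = c*((s:ℤ) + (p:ℤ) - (s:ℤ)*(p:ℤ)))
    (hqf : (q:ℤ)*f = c*((d:ℤ) - (s:ℤ) + (q:ℤ)*(1 + (s:ℤ) - (d:ℤ))))
    (i : ℕ) (hi1 : 1 ≤ i) (hi : i ≤ d) (k : ℕ) (hk : k ≤ d) :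
    ∑ t ∈ Finset.Ico 1 (d+1), Vrow s d p q i t * Urow s d p q c e f k t
      = if k = 0 then c else if i = k then (if k ≤ s then -(p:ℤ) else -(q:ℤ)) else 0 := by
  by_cases his : i = s
  · -- i = s
    rw [splitj d s hs hsd]
    have c3 : ∑ t ∈ Finset.Ico (s+1) d, Vrow s d p q i t * Urow s d p q c e f k t
        = ((d:ℤ) - (↑(s+1):ℤ)) * 0 :=
      IcoConst (by omega) 0 _ (fun t h1 h2 => by
        simp only [Vrow, chiI]; split_ifs <;> (first | omega | ring))
    have c4 : Vrow s d p q i d * Urow s d p q c e f k d = 0 := by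
      have : Vrow s d p q i d = 0 := by
        simp only [Vrow, chiI]; split_ifs <;> (first | omega | ring)
      rw [this]; ring
    rcases Nat.lt_or_ge k 1 with hk0 | hk1
    · have hk' : k = 0 := by omega
      subst hk'
      have c1 : ∑ t ∈ Finset.Ico 1 s, Vrow s d p q i t * Urow s d p q c e f 0 t
          = ((s:ℤ) - 1) * (((p:ℤ) - 1) * c) :=
        IcoConst hs _ _ (fun t h1 h2 => by
          simp only [Vrow, Urow, chiI]; split_ifs <;> (first | omega | ring))
      have c2 : Vrow s d p q i s * Urow s d p q c e f 0 s = (p:ℤ) * e := by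
        simp only [Vrow, Urow, chiI]; split_ifs <;> (first | omega | ring)
      rw [c1, c2, c3, c4, if_pos rfl]
      push_cast
      linear_combination hpe
    · rw [if_neg (by omega)]
      rcases Nat.lt_or_ge k s with hks | hks
      · have c1 : ∑ t ∈ Finset.Ico 1 s, Vrow s d p q i t * Urow s d p q c e f k t
            = ((p:ℤ) - 1) * (-(p:ℤ)) :=
          (IcoPoint hk1 hks _ (fun t h1 h2 hne => by
            simp only [Vrow, Urow, chiI]; split_ifs <;> (first | omega | ring))).trans (by
            simp only [Vrow, Urow, chiI]; split_ifs <;> (first | omega | ring))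
        have c2 : Vrow s d p q i s * Urow s d p q c e f k s = (p:ℤ) * ((p:ℤ) - 1) := by
          simp only [Vrow, Urow, chiI]; split_ifs <;> (first | omega | ring)
        rw [c1, c2, c3, c4, if_neg (by omega)]
        ring
      · rcases Nat.eq_or_lt_of_le hks with hks' | hks'
        · have c1 : ∑ t ∈ Finset.Ico 1 s, Vrow s d p q i t * Urow s d p q c e f k t
              = ((s:ℤ) - 1) * 0 :=
            IcoConst hs 0 _ (fun t h1 h2 => by
              simp only [Vrow, Urow, chiI]; split_ifs <;> (first | omega | ring))
          have c2 : Vrow s d p q i s * Urow s d p q c e f k s = -(p:ℤ) := by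
            simp only [Vrow, Urow, chiI]; split_ifs <;> (first | omega | ring)
          rw [c1, c2, c3, c4, if_pos (by omega), if_pos (by omega)]
          ring
        · have c1 : ∑ t ∈ Finset.Ico 1 s, Vrow s d p q i t * Urow s d p q c e f k t
              = ((s:ℤ) - 1) * 0 :=
            IcoConst hs 0 _ (fun t h1 h2 => by
              simp only [Vrow, Urow, chiI]; split_ifs <;> (first | omega | ring))
          have c2 : Vrow s d p q i s * Urow s d p q c e f k s = 0 := by
            simp only [Vrow, Urow, chiI]; split_ifs <;> (first | omega | ring)
          rw [c1, c2, c3, c4, if_neg (by omega)]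
          ring
  · by_cases hid : i = d
    · -- i = d
      rw [splitj d s hs hsd]
      have c1 : ∑ t ∈ Finset.Ico 1 s, Vrow s d p q i t * Urow s d p q c e f k t
          = ((s:ℤ) - 1) * 0 :=
        IcoConst hs 0 _ (fun t h1 h2 => by
          have : Vrow s d p q i t = 0 := by
            simp only [Vrow, chiI]; split_ifs <;> (first | omega | ring)
          rw [this]; ring)
      have c2 : Vrow s d p q i s * Urow s d p q c e f k s = 0 := by
        have : Vrow s d p q i s = 0 := by
          simp only [Vrow, chiI]; split_ifs <;> (first | omega | ring)
        rw [this]; ring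
      rcases Nat.lt_or_ge k 1 with hk0 | hk1
      · have hk' : k = 0 := by omega
        subst hk'
        have c3 : ∑ t ∈ Finset.Ico (s+1) d, Vrow s d p q i t * Urow s d p q c e f 0 t
            = ((d:ℤ) - (↑(s+1):ℤ)) * (((q:ℤ) - 1) * c) :=
          IcoConst (by omega) _ _ (fun t h1 h2 => by
            simp only [Vrow, Urow, chiI]; split_ifs <;> (first | omega | ring))
        have c4 : Vrow s d p q i d * Urow s d p q c e f 0 d = (q:ℤ) * f := by
          simp only [Vrow, Urow, chiI]; split_ifs <;> (first | omega | ring)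
        rw [c1, c2, c3, c4, if_pos rfl]
        push_cast
        linear_combination hqf
      · rw [if_neg (by omega)]
        rcases Nat.lt_or_ge k s with hks | hks
        · have c3 : ∑ t ∈ Finset.Ico (s+1) d, Vrow s d p q i t * Urow s d p q c e f k t
              = ((d:ℤ) - (↑(s+1):ℤ)) * 0 :=
            IcoConst (by omega) 0 _ (fun t h1 h2 => by
              simp only [Vrow, Urow, chiI]; split_ifs <;> (first | omega | ring))
          have c4 : Vrow s d p q i d * Urow s d p q c e f k d = 0 := by
            simp only [Vrow, Urow, chiI]; split_ifs <;> (first | omega | ring)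
          rw [c1, c2, c3, c4, if_neg (by omega)]
          ring
        · rcases Nat.eq_or_lt_of_le hks with hks' | hks'
          · have c3 : ∑ t ∈ Finset.Ico (s+1) d, Vrow s d p q i t * Urow s d p q c e f k t
                = ((d:ℤ) - (↑(s+1):ℤ)) * 0 :=
              IcoConst (by omega) 0 _ (fun t h1 h2 => by
                simp only [Vrow, Urow, chiI]; split_ifs <;> (first | omega | ring))
            have c4 : Vrow s d p q i d * Urow s d p q c e f k d = 0 := by
              simp only [Vrow, Urow, chiI]; split_ifs <;> (first | omega | ring)
            rw [c1, c2, c3, c4, if_neg (by omega)]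
            ring
          · rcases Nat.lt_or_ge k d with hkd | hkd
            · have c3 : ∑ t ∈ Finset.Ico (s+1) d, Vrow s d p q i t * Urow s d p q c e f k t
                  = ((q:ℤ) - 1) * (-(q:ℤ)) :=
                (IcoPoint (by omega : s+1 ≤ k) hkd _ (fun t h1 h2 hne => by
                  simp only [Vrow, Urow, chiI]; split_ifs <;> (first | omega | ring))).trans (by
                  simp only [Vrow, Urow, chiI]; split_ifs <;> (first | omega | ring))
              have c4 : Vrow s d p q i d * Urow s d p q c e f k d = (q:ℤ) * ((q:ℤ) - 1) := by
                simp only [Vrow, Urow, chiI]; split_ifs <;> (first | omega | ring)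
              rw [c1, c2, c3, c4, if_neg (by omega)]
              ring
            · have hk' : k = d := by omega
              have c3 : ∑ t ∈ Finset.Ico (s+1) d, Vrow s d p q i t * Urow s d p q c e f k t
                  = ((d:ℤ) - (↑(s+1):ℤ)) * 0 :=
                IcoConst (by omega) 0 _ (fun t h1 h2 => by
                  simp only [Vrow, Urow, chiI]; split_ifs <;> (first | omega | ring))
              have c4 : Vrow s d p q i d * Urow s d p q c e f k d = -(q:ℤ) := by
                simp only [Vrow, Urow, chiI]; split_ifs <;> (first | omega | ring)
              rw [c1, c2, c3, c4, if_pos (by omega), if_neg (by omega)]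
              ring
    · -- i not in {0, s, d}: pointwise
      have hpt : ∑ t ∈ Finset.Ico 1 (d+1), Vrow s d p q i t * Urow s d p q c e f k t
          = Vrow s d p q i i * Urow s d p q c e f k i :=
        IcoPoint (by omega) (by omega) _ (fun t h1 h2 hne => by
          have : Vrow s d p q i t = 0 := by
            simp only [Vrow, chiI]; split_ifs <;> (first | omega | ring)
          rw [this]; ring)
      rw [hpt]
      simp only [Vrow, Urow, chiI]
      split_ifs <;> (first | omega | ring)


set_option maxHeartbeats 2000000 in
lemma sumMC (hs : 1 ≤ s) (hsd : s < d)
    (hKs : K + (q:ℤ)*(s:ℤ) + (p:ℤ)*((d:ℤ)-(s:ℤ)) = (r:ℤ)*(p:ℤ)*(q:ℤ)) :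
    ∑ k ∈ Finset.range (d+1), muRow s p q K k = (r:ℤ)*(p:ℤ)*(q:ℤ) := by
  rw [splitk d s hs hsd]
  have i1 : ∑ k ∈ Finset.Ico 1 s, muRow s p q K k = ((s:ℤ) - 1) * (q:ℤ) :=
    IcoConst hs _ _ (fun t h1 h2 => by
      simp only [muRow]; split_ifs <;> (first | omega | ring))
  have i2 : ∑ k ∈ Finset.Ico (s+1) d, muRow s p q K k = ((d:ℤ) - (↑(s+1):ℤ)) * (p:ℤ) :=
    IcoConst (by omega) _ _ (fun t h1 h2 => by
      simp only [muRow]; split_ifs <;> (first | omega | ring))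
  have g0 : muRow s p q K 0 = K := by simp only [muRow]; split_ifs <;> (first | omega | ring)
  have gs : muRow s p q K s = (q:ℤ) := by simp only [muRow]; split_ifs <;> (first | omega | ring)
  have gd : muRow s p q K d = (p:ℤ) := by simp only [muRow]; split_ifs <;> (first | omega | ring)
  rw [i1, i2, g0, gs, gd]
  push_cast
  linear_combination hKs

set_option maxHeartbeats 4000000 in
lemma sumME (hs : 1 ≤ s) (hsd : s < d) (hp : 0 < p) (hq : 0 < q)
    (hcK : c * K = (p:ℤ) * q)
    (hpe : (p:ℤ)*e = c*((s:ℤ) + (p:ℤ) - (s:ℤ)*(p:ℤ)))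
    (hqf : (q:ℤ)*f = c*((d:ℤ) - (s:ℤ) + (q:ℤ)*(1 + (s:ℤ) - (d:ℤ))))
    (t : ℕ) (ht1 : 1 ≤ t) (ht : t ≤ d) :
    ∑ k ∈ Finset.range (d+1), muRow s p q K k * Urow s d p q c e f k t = 0 := by
  rw [splitk d s hs hsd]
  have g0e : muRow s p q K 0 = K := by simp only [muRow]; split_ifs <;> (first | omega | ring)
  have gse : muRow s p q K s = (q:ℤ) := by simp only [muRow]; split_ifs <;> (first | omega | ring)
  have gde : muRow s p q K d = (p:ℤ) := by simp only [muRow]; split_ifs <;> (first | omega | ring)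
  rcases Nat.lt_or_ge t s with hts | hts
  · -- t < s
    have i1 : ∑ k ∈ Finset.Ico 1 s, muRow s p q K k * Urow s d p q c e f k t
        = -((q:ℤ)*(p:ℤ)) :=
      (IcoPoint ht1 hts _ (fun k h1 h2 hne => by
        simp only [muRow, Urow, chiI]; split_ifs <;> (first | omega | ring))).trans (by
        simp only [muRow, Urow, chiI]; split_ifs <;> (first | omega | ring))
    have i2 : ∑ k ∈ Finset.Ico (s+1) d, muRow s p q K k * Urow s d p q c e f k t
        = ((d:ℤ) - (↑(s+1):ℤ)) * 0 :=
      IcoConst (by omega) 0 _ (fun k h1 h2 => by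
        simp only [muRow, Urow, chiI]; split_ifs <;> (first | omega | ring))
    have u0 : Urow s d p q c e f 0 t = c := by
      simp only [Urow, chiI]; split_ifs <;> (first | omega | ring)
    have us : Urow s d p q c e f s t = 0 := by
      simp only [Urow, chiI]; split_ifs <;> (first | omega | ring)
    have ud : Urow s d p q c e f d t = 0 := by
      simp only [Urow, chiI]; split_ifs <;> (first | omega | ring)
    rw [i1, i2, g0e, gse, gde, u0, us, ud]
    linear_combination hcK
  · rcases Nat.eq_or_lt_of_le hts with hts' | hts'
    · -- t = s
      have i1 : ∑ k ∈ Finset.Ico 1 s, muRow s p q K k * Urow s d p q c e f k t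
          = ((s:ℤ) - 1) * ((q:ℤ) * ((p:ℤ) - 1)) :=
        IcoConst hs _ _ (fun k h1 h2 => by
          simp only [muRow, Urow, chiI]; split_ifs <;> (first | omega | ring))
      have i2 : ∑ k ∈ Finset.Ico (s+1) d, muRow s p q K k * Urow s d p q c e f k t
          = ((d:ℤ) - (↑(s+1):ℤ)) * 0 :=
        IcoConst (by omega) 0 _ (fun k h1 h2 => by
          simp only [muRow, Urow, chiI]; split_ifs <;> (first | omega | ring))
      have u0 : Urow s d p q c e f 0 t = e := by
        simp only [Urow, chiI]; split_ifs <;> (first | omega | ring)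
      have us : Urow s d p q c e f s t = -1 := by
        simp only [Urow, chiI]; split_ifs <;> (first | omega | ring)
      have ud : Urow s d p q c e f d t = 0 := by
        simp only [Urow, chiI]; split_ifs <;> (first | omega | ring)
      rw [i1, i2, g0e, gse, gde, u0, us, ud]
      have hp0 : (p:ℤ) ≠ 0 := by positivity
      apply mul_left_cancel₀ hp0
      push_cast
      linear_combination K*hpe + ((s:ℤ)+(p:ℤ)-(s:ℤ)*(p:ℤ))*hcK
    · rcases Nat.lt_or_ge t d with htd | htd
      · -- s < t < d
        have i1 : ∑ k ∈ Finset.Ico 1 s, muRow s p q K k * Urow s d p q c e f k t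
            = ((s:ℤ) - 1) * 0 :=
          IcoConst hs 0 _ (fun k h1 h2 => by
            simp only [muRow, Urow, chiI]; split_ifs <;> (first | omega | ring))
        have i2 : ∑ k ∈ Finset.Ico (s+1) d, muRow s p q K k * Urow s d p q c e f k t
            = -((p:ℤ)*(q:ℤ)) :=
          (IcoPoint (by omega : s+1 ≤ t) htd _ (fun k h1 h2 hne => by
            simp only [muRow, Urow, chiI]; split_ifs <;> (first | omega | ring))).trans (by
            simp only [muRow, Urow, chiI]; split_ifs <;> (first | omega | ring))
        have u0 : Urow s d p q c e f 0 t = c := by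
          simp only [Urow, chiI]; split_ifs <;> (first | omega | ring)
        have us : Urow s d p q c e f s t = 0 := by
          simp only [Urow, chiI]; split_ifs <;> (first | omega | ring)
        have ud : Urow s d p q c e f d t = 0 := by
          simp only [Urow, chiI]; split_ifs <;> (first | omega | ring)
        rw [i1, i2, g0e, gse, gde, u0, us, ud]
        linear_combination hcK
      · -- t = d
        have htd' : t = d := by omega
        have i1 : ∑ k ∈ Finset.Ico 1 s, muRow s p q K k * Urow s d p q c e f k t
            = ((s:ℤ) - 1) * 0 :=
          IcoConst hs 0 _ (fun k h1 h2 => by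
            simp only [muRow, Urow, chiI]; split_ifs <;> (first | omega | ring))
        have i2 : ∑ k ∈ Finset.Ico (s+1) d, muRow s p q K k * Urow s d p q c e f k t
            = ((d:ℤ) - (↑(s+1):ℤ)) * ((p:ℤ) * ((q:ℤ) - 1)) :=
          IcoConst (by omega) _ _ (fun k h1 h2 => by
            simp only [muRow, Urow, chiI]; split_ifs <;> (first | omega | ring))
        have u0 : Urow s d p q c e f 0 t = f := by
          simp only [Urow, chiI]; split_ifs <;> (first | omega | ring)
        have us : Urow s d p q c e f s t = 0 := by
          simp only [Urow, chiI]; split_ifs <;> (first | omega | ring)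
        have ud : Urow s d p q c e f d t = -1 := by
          simp only [Urow, chiI]; split_ifs <;> (first | omega | ring)
        rw [i1, i2, g0e, gse, gde, u0, us, ud]
        have hq0 : (q:ℤ) ≠ 0 := by positivity
        apply mul_left_cancel₀ hq0
        push_cast
        linear_combination K*hqf + ((d:ℤ)-(s:ℤ)+(q:ℤ)*(1+(s:ℤ)-(d:ℤ)))*hcK

set_option maxHeartbeats 4000000 in
lemma sumMV (hs : 1 ≤ s) (hsd : s < d) (hp : 0 < p) (hq : 0 < q)
    (t : ℕ) (ht1 : 1 ≤ t) (ht : t ≤ d) :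
    ∑ k ∈ Finset.range (d+1), muRow s p q K k * Vrow s d p q k t = (p:ℤ)*(q:ℤ) := by
  rw [splitk d s hs hsd]
  have g0e : muRow s p q K 0 * Vrow s d p q 0 t = 0 := by
    simp only [muRow, Vrow]; split_ifs <;> (first | omega | ring)
  have gse : muRow s p q K s * Vrow s d p q s t
      = (q:ℤ) * (if t < s then (p:ℤ) - 1 else if t = s then (p:ℤ) else 0) := by
    simp only [muRow, Vrow]; split_ifs <;> (first | omega | ring)
  have gde : muRow s p q K d * Vrow s d p q d t
      = (p:ℤ) * (if t ≤ s then 0 else if t < d then (q:ℤ) - 1 else if t = d then (q:ℤ) else 0) := by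
    simp only [muRow, Vrow]; split_ifs <;> (first | omega | ring)
  rcases Nat.lt_or_ge t s with hts | hts
  · have i1 : ∑ k ∈ Finset.Ico 1 s, muRow s p q K k * Vrow s d p q k t = (q:ℤ) :=
      (IcoPoint ht1 hts _ (fun k h1 h2 hne => by
        simp only [muRow, Vrow, chiI]; split_ifs <;> (first | omega | ring))).trans (by
        simp only [muRow, Vrow, chiI]; split_ifs <;> (first | omega | ring))
    have i2 : ∑ k ∈ Finset.Ico (s+1) d, muRow s p q K k * Vrow s d p q k t
        = ((d:ℤ) - (↑(s+1):ℤ)) * 0 :=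
      IcoConst (by omega) 0 _ (fun k h1 h2 => by
        simp only [muRow, Vrow, chiI]; split_ifs <;> (first | omega | ring))
    rw [i1, i2, g0e, gse, gde, if_pos hts, if_pos (by omega : t ≤ s)]
    ring
  · rcases Nat.eq_or_lt_of_le hts with hts' | hts'
    · have i1 : ∑ k ∈ Finset.Ico 1 s, muRow s p q K k * Vrow s d p q k t = ((s:ℤ) - 1) * 0 :=
        IcoConst hs 0 _ (fun k h1 h2 => by
          simp only [muRow, Vrow, chiI]; split_ifs <;> (first | omega | ring))
      have i2 : ∑ k ∈ Finset.Ico (s+1) d, muRow s p q K k * Vrow s d p q k t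
          = ((d:ℤ) - (↑(s+1):ℤ)) * 0 :=
        IcoConst (by omega) 0 _ (fun k h1 h2 => by
          simp only [muRow, Vrow, chiI]; split_ifs <;> (first | omega | ring))
      rw [i1, i2, g0e, gse, gde, if_neg (by omega : ¬ t < s), if_pos (by omega : t = s),
        if_pos (by omega : t ≤ s)]
      ring
    · have i1 : ∑ k ∈ Finset.Ico 1 s, muRow s p q K k * Vrow s d p q k t = ((s:ℤ) - 1) * 0 :=
        IcoConst hs 0 _ (fun k h1 h2 => by
          simp only [muRow, Vrow, chiI]; split_ifs <;> (first | omega | ring))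
      rcases Nat.lt_or_ge t d with htd | htd
      · have i2 : ∑ k ∈ Finset.Ico (s+1) d, muRow s p q K k * Vrow s d p q k t = (p:ℤ) :=
          (IcoPoint (by omega : s+1 ≤ t) htd _ (fun k h1 h2 hne => by
            simp only [muRow, Vrow, chiI]; split_ifs <;> (first | omega | ring))).trans (by
            simp only [muRow, Vrow, chiI]; split_ifs <;> (first | omega | ring))
        rw [i1, i2, g0e, gse, gde, if_neg (by omega : ¬ t < s), if_neg (by omega : ¬ t = s),
          if_neg (by omega : ¬ t ≤ s), if_pos htd]
        ring
      · have htd' : t = d := by omega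
        have i2 : ∑ k ∈ Finset.Ico (s+1) d, muRow s p q K k * Vrow s d p q k t
            = ((d:ℤ) - (↑(s+1):ℤ)) * 0 :=
          IcoConst (by omega) 0 _ (fun k h1 h2 => by
            simp only [muRow, Vrow, chiI]; split_ifs <;> (first | omega | ring))
        rw [i1, i2, g0e, gse, gde, if_neg (by omega : ¬ t < s), if_neg (by omega : ¬ t = s),
          if_neg (by omega : ¬ t ≤ s), if_neg (by omega : ¬ t < d), if_pos htd']
        ring

set_option maxHeartbeats 4000000 in
lemma sumMF (hs : 1 ≤ s) (hsd : s < d) (hp : 0 < p) (hq : 0 < q)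
    (m n : ℕ) (hm1 : 1 ≤ m) (hm : m ≤ d) (hn1 : 1 ≤ n) (hn : n ≤ d) :
    ∑ k ∈ Finset.range (d+1), muRow s p q K k * Vrow s d p q k m * Urow s d p q c e f k n
      = if m = n then -((p:ℤ)*(q:ℤ)) else 0 := by
  rw [splitk d s hs hsd]
  have g0e : muRow s p q K 0 * Vrow s d p q 0 m * Urow s d p q c e f 0 n = 0 := by
    have : Vrow s d p q 0 m = 0 := by simp only [Vrow]; split_ifs <;> (first | omega | ring)
    rw [this]; ring
  rcases Nat.lt_or_ge m s with hms | hms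
  · -- m < s
    have i1 : ∑ k ∈ Finset.Ico 1 s, muRow s p q K k * Vrow s d p q k m * Urow s d p q c e f k n
        = (q:ℤ) * Urow s d p q c e f m n :=
      (IcoPoint hm1 hms _ (fun k h1 h2 hne => by
        have : Vrow s d p q k m = 0 := by
          simp only [Vrow, chiI]; split_ifs <;> (first | omega | ring)
        rw [this]; ring)).trans (by
        have h1 : muRow s p q K m = (q:ℤ) := by
          simp only [muRow]; split_ifs <;> (first | omega | ring)
        have h2 : Vrow s d p q m m = 1 := by
          simp only [Vrow, chiI]; split_ifs <;> (first | omega | ring)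
        rw [h1, h2]; ring)
    have gse : muRow s p q K s * Vrow s d p q s m * Urow s d p q c e f s n
        = (q:ℤ) * (((p:ℤ) - 1) * Urow s d p q c e f s n) := by
      have h1 : muRow s p q K s = (q:ℤ) := by
        simp only [muRow]; split_ifs <;> (first | omega | ring)
      have h2 : Vrow s d p q s m = (p:ℤ) - 1 := by
        simp only [Vrow, chiI]; split_ifs <;> (first | omega | ring)
      rw [h1, h2]; ring
    have i2 : ∑ k ∈ Finset.Ico (s+1) d, muRow s p q K k * Vrow s d p q k m * Urow s d p q c e f k n
        = ((d:ℤ) - (↑(s+1):ℤ)) * 0 :=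
      IcoConst (by omega) 0 _ (fun k h1 h2 => by
        have : Vrow s d p q k m = 0 := by
          simp only [Vrow, chiI]; split_ifs <;> (first | omega | ring)
        rw [this]; ring)
    have gde : muRow s p q K d * Vrow s d p q d m * Urow s d p q c e f d n = 0 := by
      have : Vrow s d p q d m = 0 := by
        simp only [Vrow, chiI]; split_ifs <;> (first | omega | ring)
      rw [this]; ring
    rw [i1, i2, g0e, gse, gde]
    simp only [Urow, chiI]
    split_ifs <;> (first | omega | ring)
  · rcases Nat.eq_or_lt_of_le hms with hms' | hms'
    · -- m = s
      have i1 : ∑ k ∈ Finset.Ico 1 s, muRow s p q K k * Vrow s d p q k m * Urow s d p q c e f k n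
          = ((s:ℤ) - 1) * 0 :=
        IcoConst hs 0 _ (fun k h1 h2 => by
          have : Vrow s d p q k m = 0 := by
            simp only [Vrow, chiI]; split_ifs <;> (first | omega | ring)
          rw [this]; ring)
      have gse : muRow s p q K s * Vrow s d p q s m * Urow s d p q c e f s n
          = (q:ℤ) * ((p:ℤ) * Urow s d p q c e f s n) := by
        have h1 : muRow s p q K s = (q:ℤ) := by
          simp only [muRow]; split_ifs <;> (first | omega | ring)
        have h2 : Vrow s d p q s m = (p:ℤ) := by
          simp only [Vrow, chiI]; split_ifs <;> (first | omega | ring)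
        rw [h1, h2]; ring
      have i2 : ∑ k ∈ Finset.Ico (s+1) d, muRow s p q K k * Vrow s d p q k m * Urow s d p q c e f k n
          = ((d:ℤ) - (↑(s+1):ℤ)) * 0 :=
        IcoConst (by omega) 0 _ (fun k h1 h2 => by
          have : Vrow s d p q k m = 0 := by
            simp only [Vrow, chiI]; split_ifs <;> (first | omega | ring)
          rw [this]; ring)
      have gde : muRow s p q K d * Vrow s d p q d m * Urow s d p q c e f d n = 0 := by
        have : Vrow s d p q d m = 0 := by
          simp only [Vrow, chiI]; split_ifs <;> (first | omega | ring)
        rw [this]; ring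
      rw [i1, i2, g0e, gse, gde]
      simp only [Urow, chiI]
      split_ifs <;> (first | omega | ring)
    · rcases Nat.lt_or_ge m d with hmd | hmd
      · -- s < m < d
        have i1 : ∑ k ∈ Finset.Ico 1 s, muRow s p q K k * Vrow s d p q k m * Urow s d p q c e f k n
            = ((s:ℤ) - 1) * 0 :=
          IcoConst hs 0 _ (fun k h1 h2 => by
            have : Vrow s d p q k m = 0 := by
              simp only [Vrow, chiI]; split_ifs <;> (first | omega | ring)
            rw [this]; ring)
        have gse : muRow s p q K s * Vrow s d p q s m * Urow s d p q c e f s n = 0 := by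
          have : Vrow s d p q s m = 0 := by
            simp only [Vrow, chiI]; split_ifs <;> (first | omega | ring)
          rw [this]; ring
        have i2 : ∑ k ∈ Finset.Ico (s+1) d, muRow s p q K k * Vrow s d p q k m * Urow s d p q c e f k n
            = (p:ℤ) * Urow s d p q c e f m n :=
          (IcoPoint (by omega : s+1 ≤ m) hmd _ (fun k h1 h2 hne => by
            have : Vrow s d p q k m = 0 := by
              simp only [Vrow, chiI]; split_ifs <;> (first | omega | ring)
            rw [this]; ring)).trans (by
            have h1 : muRow s p q K m = (p:ℤ) := by
              simp only [muRow]; split_ifs <;> (first | omega | ring)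
            have h2 : Vrow s d p q m m = 1 := by
              simp only [Vrow, chiI]; split_ifs <;> (first | omega | ring)
            rw [h1, h2]; ring)
        have gde : muRow s p q K d * Vrow s d p q d m * Urow s d p q c e f d n
            = (p:ℤ) * (((q:ℤ) - 1) * Urow s d p q c e f d n) := by
          have h1 : muRow s p q K d = (p:ℤ) := by
            simp only [muRow]; split_ifs <;> (first | omega | ring)
          have h2 : Vrow s d p q d m = (q:ℤ) - 1 := by
            simp only [Vrow, chiI]; split_ifs <;> (first | omega | ring)
          rw [h1, h2]; ring
        rw [i1, i2, g0e, gse, gde]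
        simp only [Urow, chiI]
        split_ifs <;> (first | omega | ring)
      · -- m = d
        have hmd' : m = d := by omega
        have i1 : ∑ k ∈ Finset.Ico 1 s, muRow s p q K k * Vrow s d p q k m * Urow s d p q c e f k n
            = ((s:ℤ) - 1) * 0 :=
          IcoConst hs 0 _ (fun k h1 h2 => by
            have : Vrow s d p q k m = 0 := by
              simp only [Vrow, chiI]; split_ifs <;> (first | omega | ring)
            rw [this]; ring)
        have gse : muRow s p q K s * Vrow s d p q s m * Urow s d p q c e f s n = 0 := by
          have : Vrow s d p q s m = 0 := by
            simp only [Vrow, chiI]; split_ifs <;> (first | omega | ring)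
          rw [this]; ring
        have i2 : ∑ k ∈ Finset.Ico (s+1) d, muRow s p q K k * Vrow s d p q k m * Urow s d p q c e f k n
            = ((d:ℤ) - (↑(s+1):ℤ)) * 0 :=
          IcoConst (by omega) 0 _ (fun k h1 h2 => by
            have : Vrow s d p q k m = 0 := by
              simp only [Vrow, chiI]; split_ifs <;> (first | omega | ring)
            rw [this]; ring)
        have gde : muRow s p q K d * Vrow s d p q d m * Urow s d p q c e f d n
            = (p:ℤ) * ((q:ℤ) * Urow s d p q c e f d n) := by
          have h1 : muRow s p q K d = (p:ℤ) := by
            simp only [muRow]; split_ifs <;> (first | omega | ring)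
          have h2 : Vrow s d p q d m = (q:ℤ) := by
            simp only [Vrow, chiI]; split_ifs <;> (first | omega | ring)
          rw [h1, h2]; ring
        rw [i1, i2, g0e, gse, gde]
        simp only [Urow, chiI]
        split_ifs <;> (first | omega | ring)

set_option maxHeartbeats 1000000 in
lemma sumWU (hs : 1 ≤ s) (hsd : s < d) (hp : 0 < p) (hq : 0 < q)
    (hcK : c * K = (p:ℤ) * q)
    (hKs : K + (q:ℤ)*(s:ℤ) + (p:ℤ)*((d:ℤ)-(s:ℤ)) = (r:ℤ)*(p:ℤ)*(q:ℤ))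
    (hpe : (p:ℤ)*e = c*((s:ℤ) + (p:ℤ) - (s:ℤ)*(p:ℤ)))
    (hqf : (q:ℤ)*f = c*((d:ℤ) - (s:ℤ) + (q:ℤ)*(1 + (s:ℤ) - (d:ℤ))))
    (i k : ℕ) (hi : i ≤ d) (hk : k ≤ d) :
    ∑ t ∈ Finset.Ico 1 (d+1), ((r:ℤ) * Vrow s d p q i t - 1) * Urow s d p q c e f k t
      = if i = k then 1 - gRow s p q r c k else 1 := by
  have expand : ∀ t ∈ Finset.Ico 1 (d+1),
      ((r:ℤ) * Vrow s d p q i t - 1) * Urow s d p q c e f k t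
      = (r:ℤ) * (Vrow s d p q i t * Urow s d p q c e f k t) - Urow s d p q c e f k t :=
    fun t _ => by ring
  rw [Finset.sum_congr rfl expand, Finset.sum_sub_distrib, ← Finset.mul_sum,
    sumU hs hsd hp hq hcK hKs hpe hqf k hk]
  rcases Nat.lt_or_ge i 1 with hi0 | hi1
  · have hi' : i = 0 := by omega
    subst hi'
    have hz : ∑ t ∈ Finset.Ico 1 (d+1), Vrow s d p q 0 t * Urow s d p q c e f k t
        = ((↑(d+1):ℤ) - 1) * 0 :=
      IcoConst (by omega) 0 _ (fun t h1 h2 => by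
        simp [Vrow])
    rw [hz]
    simp only [gRow]
    split_ifs <;> (first | omega | ring)
  · rw [sumVU hs hsd hp hq hpe hqf i hi1 hi k hk]
    simp only [gRow]
    split_ifs <;> (first | omega | ring)

lemma sumMW (hs : 1 ≤ s) (hsd : s < d) (hp : 0 < p) (hq : 0 < q)
    (hKs : K + (q:ℤ)*(s:ℤ) + (p:ℤ)*((d:ℤ)-(s:ℤ)) = (r:ℤ)*(p:ℤ)*(q:ℤ))
    (t : ℕ) (ht1 : 1 ≤ t) (ht : t ≤ d) :
    ∑ k ∈ Finset.range (d+1), muRow s p q K k * ((r:ℤ) * Vrow s d p q k t - 1) = 0 := by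
  have expand : ∀ k ∈ Finset.range (d+1),
      muRow s p q K k * ((r:ℤ) * Vrow s d p q k t - 1)
      = (r:ℤ) * (muRow s p q K k * Vrow s d p q k t) - muRow s p q K k :=
    fun k _ => by ring
  rw [Finset.sum_congr rfl expand, Finset.sum_sub_distrib, ← Finset.mul_sum,
    sumMV hs hsd hp hq t ht1 ht, sumMC hs hsd hKs]
  ring

lemma sumMWU (hs : 1 ≤ s) (hsd : s < d) (hp : 0 < p) (hq : 0 < q)
    (hcK : c * K = (p:ℤ) * q)
    (hpe : (p:ℤ)*e = c*((s:ℤ) + (p:ℤ) - (s:ℤ)*(p:ℤ)))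
    (hqf : (q:ℤ)*f = c*((d:ℤ) - (s:ℤ) + (q:ℤ)*(1 + (s:ℤ) - (d:ℤ))))
    (t n : ℕ) (ht1 : 1 ≤ t) (ht : t ≤ d) (hn1 : 1 ≤ n) (hn : n ≤ d) :
    ∑ k ∈ Finset.range (d+1), muRow s p q K k * ((r:ℤ) * Vrow s d p q k t - 1)
        * Urow s d p q c e f k n
      = if t = n then -((r:ℤ)*(p:ℤ)*(q:ℤ)) else 0 := by
  have expand : ∀ k ∈ Finset.range (d+1),
      muRow s p q K k * ((r:ℤ) * Vrow s d p q k t - 1) * Urow s d p q c e f k n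
      = (r:ℤ) * (muRow s p q K k * Vrow s d p q k t * Urow s d p q c e f k n)
        - muRow s p q K k * Urow s d p q c e f k n :=
    fun k _ => by ring
  rw [Finset.sum_congr rfl expand, Finset.sum_sub_distrib, ← Finset.mul_sum,
    sumMF hs hsd hp hq t n ht1 ht hn1 hn, sumME hs hsd hp hq hcK hpe hqf n hn1 hn]
  split_ifs <;> ring

end core
end St13

namespace St13

lemma doubleswap {d m : ℕ} (F : Fin m → ℝ) (G : Fin m → Fin d → ℝ) (x : Fin d → ℝ) :
    ∑ k : Fin m, (∑ j : Fin d, G k j * x j) * F k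
      = ∑ j : Fin d, x j * (∑ k : Fin m, F k * G k j) := by
  simp_rw [Finset.sum_mul, Finset.mul_sum]
  rw [Finset.sum_comm]
  exact Finset.sum_congr rfl fun j _ => Finset.sum_congr rfl fun k _ => by ring

lemma bary_mem {d m : ℕ} (A B : Fin m → Fin d → ℝ) (mu : Fin m → ℝ) (N : ℝ)
    (hN : 0 < N) (hmu : ∀ k, 0 < mu k)
    (hMC : ∑ k, mu k = N)
    (hMA : ∀ j, ∑ k, mu k * A k j = 0)
    (hMB : ∀ j, ∑ k, mu k * B k j = 0)
    (hMBA : ∀ n j, ∑ k, mu k * A k n * B k j = if j = n then -N else 0)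
    (x : Fin d → ℝ) (hx : ∀ k, ∑ j, B k j * x j ≤ 1) :
    x ∈ convexHull ℝ (Set.range A) := by
  set cb : Fin m → ℝ := fun k => (1 - ∑ j, B k j * x j) * mu k / N with hcb
  have hc0 : ∀ k, 0 ≤ cb k := fun k =>
    div_nonneg (mul_nonneg (by linarith [hx k]) (hmu k).le) hN.le
  have hσ : ∑ k, (∑ j, B k j * x j) * mu k = 0 := by
    rw [doubleswap mu B x]
    apply Finset.sum_eq_zero; intro j _; rw [hMB j]; ring
  have hsum : ∑ k, cb k = 1 := by
    have h1 : ∑ k, cb k = (∑ k, (mu k - (∑ j, B k j * x j) * mu k)) / N := by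
      rw [Finset.sum_div]
      exact Finset.sum_congr rfl fun k _ => by rw [hcb]; ring
    rw [h1, Finset.sum_sub_distrib, hMC, hσ, sub_zero, div_self hN.ne']
  have hcomb : ∀ n, ∑ k, cb k * A k n = x n := by
    intro n
    have h1 : ∑ k, cb k * A k n
        = ((∑ k, mu k * A k n) - ∑ k, (∑ j, B k j * x j) * (mu k * A k n)) / N := by
      rw [← Finset.sum_sub_distrib, Finset.sum_div]
      exact Finset.sum_congr rfl fun k _ => by rw [hcb]; ring
    have h2 : ∑ k, (∑ j, B k j * x j) * (mu k * A k n)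
        = ∑ j, x j * (if j = n then -N else 0) := by
      rw [doubleswap (fun k => mu k * A k n) B x]
      exact Finset.sum_congr rfl fun j _ => by rw [← hMBA n j]
    have h3 : ∑ j, x j * (if j = n then -N else 0) = -N * x n := by
      rw [Finset.sum_congr rfl (fun j _ => show x j * (if j = n then -N else 0)
          = if j = n then -N * x j else 0 from by split_ifs <;> ring)]
      rw [Finset.sum_ite_eq' Finset.univ n (fun j => -N * x j)]
      simp
    rw [h1, hMA n, h2, h3]
    field_simp
    ring
  have hxeq : ∑ k, cb k • A k = x := by
    funext n
    rw [Finset.sum_apply]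
    simp only [Pi.smul_apply, smul_eq_mul]
    exact hcomb n
  rw [← hxeq]
  exact (convex_convexHull ℝ _).sum_mem (fun k _ => hc0 k) hsum
    (fun k _ => subset_convexHull ℝ _ ⟨k, rfl⟩)

def uRe (s d p q : ℕ) (c e f : ℤ) : Fin (d+1) → Fin d → ℝ :=
  fun k j => ((Urow s d p q c e f (k:ℕ) ((j:ℕ)+1) : ℤ) : ℝ)

def wRe (s d p q r : ℕ) : Fin (d+1) → Fin d → ℝ :=
  fun k j => (((r:ℤ) * Vrow s d p q (k:ℕ) ((j:ℕ)+1) - 1 : ℤ) : ℝ)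

def muRe (s p q : ℕ) (K : ℤ) {m : ℕ} : Fin m → ℝ :=
  fun k => ((muRow s p q K (k:ℕ) : ℤ) : ℝ)

def gRe (s p q r : ℕ) (c : ℤ) {m : ℕ} : Fin m → ℝ :=
  fun k => ((gRow s p q r c (k:ℕ) : ℤ) : ℝ)

section realcore

variable {d s p q r : ℕ} {c e f K : ℤ}

lemma rWU (hs : 1 ≤ s) (hsd : s < d) (hp : 0 < p) (hq : 0 < q)
    (hcK : c * K = (p:ℤ) * q)
    (hKs : K + (q:ℤ)*(s:ℤ) + (p:ℤ)*((d:ℤ)-(s:ℤ)) = (r:ℤ)*(p:ℤ)*(q:ℤ))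
    (hpe : (p:ℤ)*e = c*((s:ℤ) + (p:ℤ) - (s:ℤ)*(p:ℤ)))
    (hqf : (q:ℤ)*f = c*((d:ℤ) - (s:ℤ) + (q:ℤ)*(1 + (s:ℤ) - (d:ℤ))))
    (i k : Fin (d+1)) :
    ∑ j : Fin d, wRe s d p q r i j * uRe s d p q c e f k j
      = if i = k then 1 - gRe s p q r c k else 1 := by
  have hi : (i:ℕ) ≤ d := Nat.lt_succ_iff.mp i.isLt
  have hk : (k:ℕ) ≤ d := Nat.lt_succ_iff.mp k.isLt
  have hz := sumWU hs hsd hp hq hcK hKs hpe hqf (i:ℕ) (k:ℕ) hi hk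
  rw [← sumFin d (fun t => ((r:ℤ) * Vrow s d p q (i:ℕ) t - 1) * Urow s d p q c e f (k:ℕ) t)] at hz
  have hcast : ∑ j : Fin d, wRe s d p q r i j * uRe s d p q c e f k j
      = ((∑ j : Fin d, ((r:ℤ) * Vrow s d p q (i:ℕ) ((j:ℕ)+1) - 1)
            * Urow s d p q c e f (k:ℕ) ((j:ℕ)+1) : ℤ) : ℝ) := by
    rw [Int.cast_sum]
    exact Finset.sum_congr rfl fun j _ => by simp only [uRe, wRe]; push_cast; ring
  rw [hcast, hz]
  by_cases h : i = k
  · rw [if_pos (congrArg Fin.val h), if_pos h]; simp only [gRe]; push_cast; ring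
  · rw [if_neg (fun hh => h (Fin.ext hh)), if_neg h]; norm_num

lemma rMC (hs : 1 ≤ s) (hsd : s < d)
    (hKs : K + (q:ℤ)*(s:ℤ) + (p:ℤ)*((d:ℤ)-(s:ℤ)) = (r:ℤ)*(p:ℤ)*(q:ℤ)) :
    ∑ k : Fin (d+1), muRe s p q K k = (r:ℝ)*(p:ℝ)*(q:ℝ) := by
  have hz := sumMC hs hsd hKs
  rw [← Fin.sum_univ_eq_sum_range (fun k => muRow s p q K k) (d+1)] at hz
  have hcast : ∑ k : Fin (d+1), muRe s p q K k
      = ((∑ k : Fin (d+1), muRow s p q K (k:ℕ) : ℤ) : ℝ) := by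
    rw [Int.cast_sum]; rfl
  rw [hcast, hz]; push_cast; ring

lemma rME (hs : 1 ≤ s) (hsd : s < d) (hp : 0 < p) (hq : 0 < q)
    (hcK : c * K = (p:ℤ) * q)
    (hpe : (p:ℤ)*e = c*((s:ℤ) + (p:ℤ) - (s:ℤ)*(p:ℤ)))
    (hqf : (q:ℤ)*f = c*((d:ℤ) - (s:ℤ) + (q:ℤ)*(1 + (s:ℤ) - (d:ℤ))))
    (j : Fin d) :
    ∑ k : Fin (d+1), muRe s p q K k * uRe s d p q c e f k j = 0 := by
  have hz := sumME hs hsd hp hq hcK hpe hqf ((j:ℕ)+1) (by omega) (by have := j.isLt; omega)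
  rw [← Fin.sum_univ_eq_sum_range
    (fun k => muRow s p q K k * Urow s d p q c e f k ((j:ℕ)+1)) (d+1)] at hz
  have hcast : ∑ k : Fin (d+1), muRe s p q K k * uRe s d p q c e f k j
      = ((∑ k : Fin (d+1), muRow s p q K (k:ℕ) * Urow s d p q c e f (k:ℕ) ((j:ℕ)+1) : ℤ) : ℝ) := by
    rw [Int.cast_sum]
    exact Finset.sum_congr rfl fun k _ => by simp only [muRe, uRe]; push_cast; ring
  rw [hcast, hz]; norm_num

lemma rMW (hs : 1 ≤ s) (hsd : s < d) (hp : 0 < p) (hq : 0 < q)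
    (hKs : K + (q:ℤ)*(s:ℤ) + (p:ℤ)*((d:ℤ)-(s:ℤ)) = (r:ℤ)*(p:ℤ)*(q:ℤ))
    (j : Fin d) :
    ∑ k : Fin (d+1), muRe s p q K k * wRe s d p q r k j = 0 := by
  have hz := sumMW hs hsd hp hq hKs ((j:ℕ)+1) (by omega) (by have := j.isLt; omega)
  rw [← Fin.sum_univ_eq_sum_range
    (fun k => muRow s p q K k * ((r:ℤ) * Vrow s d p q k ((j:ℕ)+1) - 1)) (d+1)] at hz
  have hcast : ∑ k : Fin (d+1), muRe s p q K k * wRe s d p q r k j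
      = ((∑ k : Fin (d+1), muRow s p q K (k:ℕ)
          * ((r:ℤ) * Vrow s d p q (k:ℕ) ((j:ℕ)+1) - 1) : ℤ) : ℝ) := by
    rw [Int.cast_sum]
    exact Finset.sum_congr rfl fun k _ => by simp only [muRe, wRe]; push_cast; ring
  rw [hcast, hz]; norm_num

lemma rMWU (hs : 1 ≤ s) (hsd : s < d) (hp : 0 < p) (hq : 0 < q)
    (hcK : c * K = (p:ℤ) * q)
    (hpe : (p:ℤ)*e = c*((s:ℤ) + (p:ℤ) - (s:ℤ)*(p:ℤ)))
    (hqf : (q:ℤ)*f = c*((d:ℤ) - (s:ℤ) + (q:ℤ)*(1 + (s:ℤ) - (d:ℤ))))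
    (t n : Fin d) :
    ∑ k : Fin (d+1), muRe s p q K k * wRe s d p q r k t * uRe s d p q c e f k n
      = if t = n then -((r:ℝ)*(p:ℝ)*(q:ℝ)) else 0 := by
  have hz := sumMWU (r := r) hs hsd hp hq hcK hpe hqf ((t:ℕ)+1) ((n:ℕ)+1)
    (by omega) (by have := t.isLt; omega) (by omega) (by have := n.isLt; omega)
  rw [← Fin.sum_univ_eq_sum_range
    (fun k => muRow s p q K k * ((r:ℤ) * Vrow s d p q k ((t:ℕ)+1) - 1)
      * Urow s d p q c e f k ((n:ℕ)+1)) (d+1)] at hz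
  have hcast : ∑ k : Fin (d+1), muRe s p q K k * wRe s d p q r k t * uRe s d p q c e f k n
      = ((∑ k : Fin (d+1), muRow s p q K (k:ℕ) * ((r:ℤ) * Vrow s d p q (k:ℕ) ((t:ℕ)+1) - 1)
          * Urow s d p q c e f (k:ℕ) ((n:ℕ)+1) : ℤ) : ℝ) := by
    rw [Int.cast_sum]
    exact Finset.sum_congr rfl fun k _ => by simp only [muRe, wRe, uRe]; push_cast; ring
  rw [hcast, hz]
  by_cases h : t = n
  · rw [if_pos (by rw [h]), if_pos h]; push_cast; ring
  · rw [if_neg (fun hh => h (Fin.ext (by omega))), if_neg h]; norm_num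

lemma muRe_pos (hc : 0 < c) (hK : 0 < K) (hp : 0 < p) (hq : 0 < q) {m : ℕ} (k : Fin m) :
    0 < muRe s p q K k := by
  have : 0 < muRow s p q K (k:ℕ) := by
    simp only [muRow]; split_ifs
    · exact hK
    · exact_mod_cast hq
    · exact_mod_cast hp
  simp only [muRe]; exact_mod_cast this

lemma gRe_pos (hc : 0 < c) (hr : 0 < r) (hp : 0 < p) (hq : 0 < q) {m : ℕ} (k : Fin m) :
    0 < gRe s p q r c k := by
  have : 0 < gRow s p q r c (k:ℕ) := by
    simp only [gRow]; split_ifs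
    · exact mul_pos (by exact_mod_cast hr) hc
    · exact mul_pos (by exact_mod_cast hr) (by exact_mod_cast hp)
    · exact mul_pos (by exact_mod_cast hr) (by exact_mod_cast hq)
  simp only [gRe]; exact_mod_cast this

lemma VrowEq (a b : ℕ → ℤ) (hs : 1 ≤ s) (hsd : s < d)
    (ha : ∀ i, 1 ≤ i → i ≤ s - 1 → a i = (p : ℤ) - 1) (has : a s = (p : ℤ))
    (hb1 : ∀ i, 1 ≤ i → i ≤ s → b i = 0)
    (hb2 : ∀ i, s + 1 ≤ i → i ≤ d - 1 → b i = (q : ℤ) - 1) (hbd : b d = (q : ℤ))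
    (i : Fin (d+1)) (j : Fin d) :
    simplexVerts2 d s a b i j = Vrow s d p q (i:ℕ) ((j:ℕ)+1) := by
  have hj : (j:ℕ) < d := j.isLt
  simp only [simplexVerts2, Vrow, chiI]
  split_ifs <;>
    first
      | rfl
      | omega
      | (exact ha _ (by omega) (by omega))
      | (exact hb1 _ (by omega) (by omega))
      | (exact hb2 _ (by omega) (by omega))
      | (rw [show (j:ℕ)+1 = s from by omega]; exact has)
      | (rw [show (j:ℕ)+1 = d from by omega]; exact hbd)

end realcore


lemma bary_repr {d m : ℕ} (A B : Fin m → Fin d → ℝ) (mu : Fin m → ℝ) (N : ℝ) (hN : 0 < N)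
    (hMA : ∀ j, ∑ k, mu k * A k j = 0)
    (hMBA : ∀ n j, ∑ k, mu k * A k n * B k j = if j = n then -N else 0)
    (x : Fin d → ℝ) (n : Fin d) :
    ∑ k, ((1 - ∑ j, B k j * x j) * mu k / N) * A k n = x n := by
  have h1 : ∑ k, ((1 - ∑ j, B k j * x j) * mu k / N) * A k n
      = ((∑ k, mu k * A k n) - ∑ k, (∑ j, B k j * x j) * (mu k * A k n)) / N := by
    rw [← Finset.sum_sub_distrib, Finset.sum_div]
    exact Finset.sum_congr rfl fun k _ => by ring
  have h2 : ∑ k, (∑ j, B k j * x j) * (mu k * A k n)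
      = ∑ j, x j * (if j = n then -N else 0) := by
    rw [doubleswap (fun k => mu k * A k n) B x]
    exact Finset.sum_congr rfl fun j _ => by rw [← hMBA n j]
  have h3 : ∑ j, x j * (if j = n then -N else 0) = -N * x n := by
    rw [Finset.sum_congr rfl (fun j _ => show x j * (if j = n then -N else 0)
        = if j = n then -N * x j else 0 from by split_ifs <;> ring)]
    rw [Finset.sum_ite_eq' Finset.univ n (fun j => -N * x j)]
    simp
  rw [h1, hMA n, h2, h3]
  field_simp
  ring

section mainsec

variable {d s p q r : ℕ} {c e f K : ℤ}

def Qset (s d p q : ℕ) (c e f : ℤ) : Set (Fin d → ℝ) :=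
  {x | ∀ k : Fin (d+1), ∑ j, uRe s d p q c e f k j * x j ≤ 1}

lemma imageEq (hs : 1 ≤ s) (hsd : s < d) (a b : ℕ → ℤ)
    (ha : ∀ i, 1 ≤ i → i ≤ s - 1 → a i = (p : ℤ) - 1) (has : a s = (p : ℤ))
    (hb1 : ∀ i, 1 ≤ i → i ≤ s → b i = 0)
    (hb2 : ∀ i, s + 1 ≤ i → i ≤ d - 1 → b i = (q : ℤ) - 1) (hbd : b d = (q : ℤ)) :
    ((fun x : Fin d → ℝ => (r:ℝ) • x - 1) '' simplexOf (simplexVerts2 d s a b))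
      = convexHull ℝ (Set.range (wRe s d p q r)) := by
  let φ : (Fin d → ℝ) →ᵃ[ℝ] (Fin d → ℝ) :=
    { toFun := fun x => (r:ℝ) • x - 1
      linear := (r:ℝ) • LinearMap.id
      map_vadd' := by
        intro pt v
        simp only [vadd_eq_add, LinearMap.smul_apply, LinearMap.id_apply]
        rw [smul_add]; abel }
  have hφ : (fun x : Fin d → ℝ => (r:ℝ) • x - 1) = ⇑φ := rfl
  rw [hφ, simplexOf, AffineMap.image_convexHull, ← Set.range_comp]
  have hfun : (⇑φ ∘ fun i : Fin (d+1) => toReal (simplexVerts2 d s a b i)) = wRe s d p q r := by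
    funext i j
    show (r:ℝ) • (toReal (simplexVerts2 d s a b i)) j - (1 : Fin d → ℝ) j = wRe s d p q r i j
    simp only [Pi.smul_apply, Pi.one_apply, smul_eq_mul, toReal, wRe]
    rw [VrowEq a b hs hsd ha has hb1 hb2 hbd i j]
    push_cast
    ring
  rw [hfun]

lemma hullQ (hs : 1 ≤ s) (hsd : s < d) (hp : 0 < p) (hq : 0 < q) (hr : 0 < r)
    (hc : 0 < c) (hK : 0 < K)
    (hcK : c * K = (p:ℤ) * q)
    (hKs : K + (q:ℤ)*(s:ℤ) + (p:ℤ)*((d:ℤ)-(s:ℤ)) = (r:ℤ)*(p:ℤ)*(q:ℤ))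
    (hpe : (p:ℤ)*e = c*((s:ℤ) + (p:ℤ) - (s:ℤ)*(p:ℤ)))
    (hqf : (q:ℤ)*f = c*((d:ℤ) - (s:ℤ) + (q:ℤ)*(1 + (s:ℤ) - (d:ℤ)))) :
    convexHull ℝ (Set.range (wRe s d p q r)) = Qset s d p q c e f := by
  have hN : (0:ℝ) < (r:ℝ)*(p:ℝ)*(q:ℝ) :=
    mul_pos (mul_pos (by exact_mod_cast hr) (by exact_mod_cast hp)) (by exact_mod_cast hq)
  apply Set.Subset.antisymm
  · apply convexHull_min
    · rintro x ⟨i, rfl⟩ k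
      show ∑ j, uRe s d p q c e f k j * wRe s d p q r i j ≤ 1
      have h1 : ∑ j, uRe s d p q c e f k j * wRe s d p q r i j
          = ∑ j, wRe s d p q r i j * uRe s d p q c e f k j :=
        Finset.sum_congr rfl fun j _ => by ring
      rw [h1, rWU hs hsd hp hq hcK hKs hpe hqf i k]
      split_ifs
      · linarith [gRe_pos (c := c) (s := s) (p := p) (q := q) (r := r) hc hr hp hq k]
      · exact le_refl 1
    · have hQ : Qset s d p q c e f
          = ⋂ k : Fin (d+1), {x : Fin d → ℝ | ∑ j, uRe s d p q c e f k j * x j ≤ 1} := by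
        ext x; simp [Qset, Set.mem_iInter]
      rw [hQ]
      apply convex_iInter
      intro k
      apply convex_halfSpace_le
      constructor
      · intro x y
        simp only [Pi.add_apply]
        rw [← Finset.sum_add_distrib]
        exact Finset.sum_congr rfl fun j _ => by ring
      · intro cc x
        simp only [Pi.smul_apply, smul_eq_mul]
        rw [Finset.mul_sum]
        exact Finset.sum_congr rfl fun j _ => by ring
  · intro x hx
    exact bary_mem (wRe s d p q r) (uRe s d p q c e f) (muRe s p q K) ((r:ℝ)*(p:ℝ)*(q:ℝ))
      hN (muRe_pos hc hK hp hq) (rMC hs hsd hKs) (rMW hs hsd hp hq hKs)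
      (rME hs hsd hp hq hcK hpe hqf)
      (fun n j => by
        rw [rMWU hs hsd hp hq hcK hpe hqf n j]
        by_cases h : j = n
        · rw [if_pos h.symm, if_pos h]
        · rw [if_neg (fun hh => h hh.symm), if_neg h])
      x hx

set_option maxHeartbeats 1000000 in
theorem mainRefl (hs : 1 ≤ s) (hsd : s < d) (hp : 0 < p) (hq : 0 < q) (hr : 0 < r)
    (hc : 0 < c) (hK : 0 < K)
    (hcK : c * K = (p:ℤ) * q)
    (hKs : K + (q:ℤ)*(s:ℤ) + (p:ℤ)*((d:ℤ)-(s:ℤ)) = (r:ℤ)*(p:ℤ)*(q:ℤ))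
    (hpe : (p:ℤ)*e = c*((s:ℤ) + (p:ℤ) - (s:ℤ)*(p:ℤ)))
    (hqf : (q:ℤ)*f = c*((d:ℤ) - (s:ℤ) + (q:ℤ)*(1 + (s:ℤ) - (d:ℤ))))
    (a b : ℕ → ℤ)
    (ha : ∀ i, 1 ≤ i → i ≤ s - 1 → a i = (p : ℤ) - 1) (has : a s = (p : ℤ))
    (hb1 : ∀ i, 1 ≤ i → i ≤ s → b i = 0)
    (hb2 : ∀ i, s + 1 ≤ i → i ≤ d - 1 → b i = (q : ℤ) - 1) (hbd : b d = (q : ℤ)) :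
    IsReflexive ((fun x : Fin d → ℝ => (r:ℝ) • x - 1) '' simplexOf (simplexVerts2 d s a b)) := by
  have hN : (0:ℝ) < (r:ℝ)*(p:ℝ)*(q:ℝ) :=
    mul_pos (mul_pos (by exact_mod_cast hr) (by exact_mod_cast hp)) (by exact_mod_cast hq)
  rw [imageEq hs hsd a b ha has hb1 hb2 hbd]
  have hQ := hullQ (e := e) (f := f) (K := K) hs hsd hp hq hr hc hK hcK hKs hpe hqf
  refine ⟨?_, ?_, ?_⟩
  · -- 0 in interior
    have hopen : IsOpen {x : Fin d → ℝ | ∀ k : Fin (d+1), ∑ j, uRe s d p q c e f k j * x j < 1} := by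
      have hset : {x : Fin d → ℝ | ∀ k : Fin (d+1), ∑ j, uRe s d p q c e f k j * x j < 1}
          = ⋂ k : Fin (d+1), {x : Fin d → ℝ | ∑ j, uRe s d p q c e f k j * x j < 1} := by
        ext x; simp [Set.mem_iInter]
      rw [hset]
      apply isOpen_iInter_of_finite
      intro k
      exact isOpen_lt (continuous_finset_sum _ fun j _ =>
        continuous_const.mul (continuous_apply j)) continuous_const
    have hsub : {x : Fin d → ℝ | ∀ k : Fin (d+1), ∑ j, uRe s d p q c e f k j * x j < 1}
        ⊆ convexHull ℝ (Set.range (wRe s d p q r)) := by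
      intro x hx
      rw [hQ]
      exact fun k => (hx k).le
    have h0mem : (0 : Fin d → ℝ) ∈
        {x : Fin d → ℝ | ∀ k : Fin (d+1), ∑ j, uRe s d p q c e f k j * x j < 1} := by
      simp only [Set.mem_setOf_eq]
      intro k
      have hz : ∑ j : Fin d, uRe s d p q c e f k j * (0 : Fin d → ℝ) j = 0 :=
        Finset.sum_eq_zero fun j _ => by simp
      rw [hz]; norm_num
    exact interior_maximal hsub hopen h0mem
  · -- uniqueness of interior lattice point
    intro x hxint hlat
    have hxQ : x ∈ Qset s d p q c e f := by
      have hx := interior_subset hxint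
      rwa [hQ] at hx
    choose nf hnf using hlat
    have hσint : ∀ k : Fin (d+1), ∃ z : ℤ, ∑ j, uRe s d p q c e f k j * x j = (z:ℝ) := by
      intro k
      refine ⟨∑ j : Fin d, Urow s d p q c e f (k:ℕ) ((j:ℕ)+1) * nf j, ?_⟩
      rw [Int.cast_sum]
      exact Finset.sum_congr rfl fun j _ => by
        rw [hnf j]; simp only [uRe]; push_cast; ring
    have hu0 : ∀ k : Fin (d+1), ∃ j : Fin d, uRe s d p q c e f k j ≠ 0 := by
      intro k
      rcases Nat.eq_zero_or_pos (k:ℕ) with hk0 | hk1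
      · by_cases hs1 : s = 1
        · refine ⟨⟨0, by omega⟩, ?_⟩
          have hscast : (s:ℤ) = 1 := by rw [hs1]; norm_num
          have he : (p:ℤ) * e = c := by rw [hscast] at hpe; linear_combination hpe
          have hene : e ≠ 0 := by
            intro h0
            rw [h0, mul_zero] at he
            omega
          show ((Urow s d p q c e f (k:ℕ) (((⟨0, by omega⟩ : Fin d):ℕ)+1) : ℤ) : ℝ) ≠ 0
          have hval : Urow s d p q c e f (k:ℕ) (((⟨0, by omega⟩ : Fin d):ℕ)+1) = e := by
            simp only [Urow, chiI]
            split_ifs <;> (first | omega | rfl)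
          rw [hval]
          exact_mod_cast hene
        · refine ⟨⟨0, by omega⟩, ?_⟩
          show ((Urow s d p q c e f (k:ℕ) (((⟨0, by omega⟩ : Fin d):ℕ)+1) : ℤ) : ℝ) ≠ 0
          have hval : Urow s d p q c e f (k:ℕ) (((⟨0, by omega⟩ : Fin d):ℕ)+1) = c := by
            simp only [Urow, chiI]
            split_ifs <;> (first | omega | rfl)
          rw [hval]
          exact_mod_cast hc.ne'
      · have hkd : (k:ℕ) ≤ d := Nat.lt_succ_iff.mp k.isLt
        refine ⟨⟨(k:ℕ)-1, by omega⟩, ?_⟩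
        show ((Urow s d p q c e f (k:ℕ) (((⟨(k:ℕ)-1, by omega⟩ : Fin d):ℕ)+1) : ℤ) : ℝ) ≠ 0
        have hco : ((⟨(k:ℕ)-1, by omega⟩ : Fin d):ℕ)+1 = (k:ℕ) := by
          simp only [Fin.val_mk]; omega
        rw [hco]
        have hval : Urow s d p q c e f (k:ℕ) (k:ℕ) ≠ 0 := by
          simp only [Urow, chiI]
          split_ifs <;> omega
        exact_mod_cast hval
    have hσ0 : ∀ k : Fin (d+1), ∑ j, uRe s d p q c e f k j * x j ≤ 0 := by
      intro k
      by_contra hpos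
      push_neg at hpos
      obtain ⟨z, hz⟩ := hσint k
      have hσle : ∑ j, uRe s d p q c e f k j * x j ≤ 1 := hxQ k
      have hz1 : (z:ℝ) = 1 := by
        have h1 : (0:ℤ) < z := by exact_mod_cast hz ▸ hpos
        have h2 : z ≤ (1:ℤ) := by exact_mod_cast hz ▸ hσle
        have : z = 1 := by omega
        exact_mod_cast this
      obtain ⟨ε, hε, hball⟩ := Metric.isOpen_iff.mp isOpen_interior x hxint
      obtain ⟨j0, hj0⟩ := hu0 k
      set u : Fin d → ℝ := uRe s d p q c e f k with hu
      have hune : u ≠ 0 := fun h => hj0 (congrFun h j0)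
      have hnu : 0 < ‖u‖ := norm_pos_iff.mpr hune
      set δ : ℝ := ε / (2 * ‖u‖) with hδdef
      have hδ : 0 < δ := div_pos hε (by positivity)
      have hmemball : x + δ • u ∈ Metric.ball x ε := by
        rw [Metric.mem_ball, dist_eq_norm]
        have h5 : x + δ • u - x = δ • u := by abel
        rw [h5, norm_smul, Real.norm_eq_abs, abs_of_pos hδ, hδdef]
        have h6 : ε / (2 * ‖u‖) * ‖u‖ = ε / 2 := by field_simp
        rw [h6]
        linarith
      have hmemQ : x + δ • u ∈ Qset s d p q c e f := by
        have h6 := interior_subset (hball hmemball)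
        rwa [hQ] at h6
      have hsum2 : ∑ j, u j * (x + δ • u) j = (∑ j, u j * x j) + δ * ∑ j, u j * u j := by
        rw [Finset.mul_sum, ← Finset.sum_add_distrib]
        exact Finset.sum_congr rfl fun j _ => by
          simp only [Pi.add_apply, Pi.smul_apply, smul_eq_mul]; ring
      have husq : 0 < ∑ j, u j * u j :=
        Finset.sum_pos' (fun j _ => mul_self_nonneg _)
          ⟨j0, Finset.mem_univ _, mul_self_pos.mpr hj0⟩
      have h8 := hmemQ k
      rw [hsum2, hz, hz1] at h8
      nlinarith [mul_pos hδ husq]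
    have hMEx : ∑ k : Fin (d+1), (∑ j, uRe s d p q c e f k j * x j) * muRe s p q K k = 0 := by
      rw [doubleswap (muRe s p q K) (uRe s d p q c e f) x]
      apply Finset.sum_eq_zero
      intro j _
      rw [rME hs hsd hp hq hcK hpe hqf j]
      ring
    have hall := (Finset.sum_eq_zero_iff_of_nonpos (fun k _ => by
      have h1 := hσ0 k
      have h2 := (muRe_pos (s := s) (p := p) (q := q) (K := K) hc hK hp hq k).le
      nlinarith)).mp hMEx
    have hσeq0 : ∀ k : Fin (d+1), ∑ j, uRe s d p q c e f k j * x j = 0 := by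
      intro k
      have h9 := hall k (Finset.mem_univ k)
      rcases mul_eq_zero.mp h9 with h | h
      · exact h
      · exact absurd h (muRe_pos hc hK hp hq k).ne'
    funext m
    simp only [Pi.zero_apply]
    have hrep := bary_repr (wRe s d p q r) (uRe s d p q c e f) (muRe s p q K)
      ((r:ℝ)*(p:ℝ)*(q:ℝ)) hN (rMW hs hsd hp hq hKs)
      (fun n j => by
        rw [rMWU hs hsd hp hq hcK hpe hqf n j]
        by_cases h : j = n
        · rw [if_pos h.symm, if_pos h]
        · rw [if_neg (fun hh => h hh.symm), if_neg h])
      x m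
    rw [← hrep]
    have hterm : ∀ k ∈ Finset.univ, ((1 - ∑ j, uRe s d p q c e f k j * x j)
        * muRe s p q K k / ((r:ℝ)*(p:ℝ)*(q:ℝ))) * wRe s d p q r k m
        = (muRe s p q K k * wRe s d p q r k m) / ((r:ℝ)*(p:ℝ)*(q:ℝ)) := by
      intro k _
      rw [hσeq0 k]
      ring
    rw [Finset.sum_congr rfl hterm, ← Finset.sum_div, rMW hs hsd hp hq hKs m]
    simp
  · -- dual polytope is a lattice polytope
    refine ⟨Finset.image (fun k : Fin (d+1) =>
      (fun j : Fin d => Urow s d p q c e f (k:ℕ) ((j:ℕ)+1))) Finset.univ, ?_⟩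
    have hVset : toReal '' ((Finset.image (fun k : Fin (d+1) =>
        (fun j : Fin d => Urow s d p q c e f (k:ℕ) ((j:ℕ)+1))) Finset.univ
          : Finset (Fin d → ℤ)) : Set (Fin d → ℤ))
        = Set.range (uRe s d p q c e f) := by
      rw [Finset.coe_image, Finset.coe_univ, Set.image_univ, ← Set.range_comp]
      rfl
    rw [hVset]
    apply Set.Subset.antisymm
    · intro y hy
      have hτ : ∀ k : Fin (d+1), ∑ j, wRe s d p q r k j * y j ≤ 1 := by
        intro k
        exact hy (wRe s d p q r k) (subset_convexHull ℝ _ ⟨k, rfl⟩)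
      exact bary_mem (uRe s d p q c e f) (wRe s d p q r) (muRe s p q K)
        ((r:ℝ)*(p:ℝ)*(q:ℝ)) hN (muRe_pos hc hK hp hq) (rMC hs hsd hKs)
        (rME hs hsd hp hq hcK hpe hqf) (rMW hs hsd hp hq hKs)
        (fun n j => (Finset.sum_congr rfl fun k _ => by ring).trans
          (rMWU hs hsd hp hq hcK hpe hqf j n))
        y hτ
    · apply convexHull_min
      · rintro y ⟨k, rfl⟩
        intro x hxP
        have hxQ : x ∈ Qset s d p q c e f := by rwa [hQ] at hxP
        have h10 := hxQ k
        calc ∑ i, x i * uRe s d p q c e f k i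
            = ∑ i, uRe s d p q c e f k i * x i := Finset.sum_congr rfl fun i _ => by ring
          _ ≤ 1 := h10
      · intro y1 hy1 y2 hy2 aa bb haa hbb hab
        intro x hx
        have h1 := hy1 x hx
        have h2 := hy2 x hx
        show ∑ i, x i * (aa • y1 + bb • y2) i ≤ 1
        have hcomb2 : ∑ i, x i * (aa • y1 + bb • y2) i
            = aa * (∑ i, x i * y1 i) + bb * (∑ i, x i * y2 i) := by
          rw [Finset.mul_sum, Finset.mul_sum, ← Finset.sum_add_distrib]
          exact Finset.sum_congr rfl fun i _ => by
            simp only [Pi.add_apply, Pi.smul_apply, smul_eq_mul]; ring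
        rw [hcomb2]
        have h3 := mul_le_mul_of_nonneg_left h1 haa
        have h4 := mul_le_mul_of_nonneg_left h2 hbb
        linarith

end mainsec

end St13

/-- with `a i = p - 1` for `1 ≤ i ≤ s-1`, `a s = p`, `b i = 0` for
`1 ≤ i ≤ s`, `b i = q - 1` for `s+1 ≤ i ≤ d-1`, `b d = q` (`p ≠ q` primes), and
`k = rpq - p(d-s) - qs ∈ {p, q}`, the simplex `Δ(A,B)` is Gorenstein of index `r`,
i.e. `r·Δ(A,B) - (1,…,1)` is reflexive. -/
theorem statement13 (d s : ℕ) (hs : 1 ≤ s) (hsd : s < d)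
    (p q r : ℕ) (hp : p.Prime) (hq : q.Prime) (hpq : p ≠ q) (hr : 1 ≤ r)
    (a b : ℕ → ℤ)
    (ha : ∀ i, 1 ≤ i → i ≤ s - 1 → a i = (p : ℤ) - 1) (has : a s = (p : ℤ))
    (hb1 : ∀ i, 1 ≤ i → i ≤ s → b i = 0)
    (hb2 : ∀ i, s + 1 ≤ i → i ≤ d - 1 → b i = (q : ℤ) - 1) (hbd : b d = (q : ℤ))
    (hk : (r : ℤ) * p * q - p * ((d : ℤ) - s) - q * s = (p : ℤ) ∨
          (r : ℤ) * p * q - p * ((d : ℤ) - s) - q * s = (q : ℤ)) :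
    IsGorenstein (simplexOf (simplexVerts2 d s a b)) r ∧
      IsReflexive ((fun x => (r : ℝ) • x - 1) '' simplexOf (simplexVerts2 d s a b)) := by
  
  have hp0 : 0 < p := hp.pos
  have hq0 : 0 < q := hq.pos
  obtain ⟨c, e, f, K, hc, hK, hcK, hKs, hpe, hqf⟩ :
      ∃ c e f K : ℤ, 0 < c ∧ 0 < K ∧ c * K = (p:ℤ) * q ∧
        K + (q:ℤ)*(s:ℤ) + (p:ℤ)*((d:ℤ)-(s:ℤ)) = (r:ℤ)*(p:ℤ)*(q:ℤ) ∧
        (p:ℤ)*e = c*((s:ℤ) + (p:ℤ) - (s:ℤ)*(p:ℤ)) ∧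
        (q:ℤ)*f = c*((d:ℤ) - (s:ℤ) + (q:ℤ)*(1 + (s:ℤ) - (d:ℤ))) := by
    rcases hk with hk1 | hk2
    · have hdvd : (p:ℤ) ∣ (q:ℤ) * (s:ℤ) :=
        ⟨(r:ℤ)*q - ((d:ℤ)-s) - 1, by linear_combination -hk1⟩
      have hdvdn : p ∣ q * s := by
        have h0 : (p:ℤ) ∣ ((q*s : ℕ) : ℤ) := by push_cast; exact hdvd
        exact_mod_cast h0
      have hps : p ∣ s := ((Nat.Prime.dvd_mul hp).mp hdvdn).resolve_left
        (fun hpq' => hpq ((Nat.prime_dvd_prime_iff_eq hp hq).mp hpq'))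
      obtain ⟨s', hs'⟩ := hps
      have hscast : (s:ℤ) = (p:ℤ) * (s':ℤ) := by exact_mod_cast hs'
      exact ⟨(q:ℤ), (q:ℤ)*((s':ℤ) + 1 - (s:ℤ)), (d:ℤ) - (s:ℤ) + (q:ℤ)*(1 + (s:ℤ) - (d:ℤ)),
        (p:ℤ), by exact_mod_cast hq0, by exact_mod_cast hp0, by ring,
        by linear_combination -hk1, by linear_combination (-(q:ℤ))*hscast, by ring⟩
    · have hsd' : s ≤ d := hsd.le
      have h1 : ((d - s : ℕ):ℤ) = (d:ℤ) - (s:ℤ) := by push_cast [Nat.cast_sub hsd']; ring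
      have hdvd : (q:ℤ) ∣ (p:ℤ) * ((d - s : ℕ) : ℤ) :=
        ⟨(r:ℤ)*p - (s:ℤ) - 1, by rw [h1]; linear_combination -hk2⟩
      have hdvdn : q ∣ p * (d - s) := by
        have h0 : (q:ℤ) ∣ ((p*(d-s) : ℕ) : ℤ) := by push_cast; exact_mod_cast hdvd
        exact_mod_cast h0
      have hqds : q ∣ (d - s) := ((Nat.Prime.dvd_mul hq).mp hdvdn).resolve_left
        (fun hq' => hpq ((Nat.prime_dvd_prime_iff_eq hq hp).mp hq').symm)
      obtain ⟨t', ht'⟩ := hqds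
      have hdcast : (d:ℤ) - (s:ℤ) = (q:ℤ) * (t':ℤ) := by
        rw [← h1]; exact_mod_cast ht'
      exact ⟨(p:ℤ), (s:ℤ) + (p:ℤ) - (s:ℤ)*(p:ℤ), (p:ℤ)*((t':ℤ) + 1 + (s:ℤ) - (d:ℤ)),
        (q:ℤ), by exact_mod_cast hp0, by exact_mod_cast hq0, by ring,
        by linear_combination -hk2, by ring, by linear_combination (-(p:ℤ))*hdcast⟩
  have hrefl := St13.mainRefl hs hsd hp0 hq0 hr hc hK hcK hKs hpe hqf a b ha has hb1 hb2 hbd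
  constructor
  · refine ⟨(fun _ => (-1 : ℤ)), ?_⟩
    have heq : (fun x : Fin d → ℝ => (r:ℝ) • x + toReal (fun _ => (-1:ℤ)))
        = (fun x : Fin d → ℝ => (r:ℝ) • x - 1) := by
      funext x
      funext j
      simp only [Pi.add_apply, Pi.sub_apply, Pi.smul_apply, Pi.one_apply, toReal,
        smul_eq_mul, Int.cast_neg, Int.cast_one]
      ring
    rw [heq]
    exact hrefl
  · exact hrefl
end
end

section
/- Let Δ(A) be Gorenstein of index r (with 1 ≤ a_0,…,a_{d-1} < a_d, a_i | a_d for 0 ≤ i ≤ d−1, r·a_d = a_0 + ⋯ + a_{d-1} + 1) and set Δ = r·Δ(A) − (1,…,1) and b_i = a_d/a_i for 0 ≤ i ≤ d−1. Then the normalized volume of the dual reflexive simplex Δ^∨ equals r · b_0 b_1 ⋯ b_{d-1}. -/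
open scoped BigOperators
open MeasureTheory

noncomputable section

/-! ### Volume of the corner simplex -/

lemma hyp_null {n : ℕ} {i j : Fin n} (hij : i ≠ j) :
    volume {y : Fin n → ℝ | y i = y j} = 0 := by
  set L : (Fin n → ℝ) →ₗ[ℝ] ℝ :=
    (LinearMap.proj i : (Fin n → ℝ) →ₗ[ℝ] ℝ) - (LinearMap.proj j : (Fin n → ℝ) →ₗ[ℝ] ℝ) with hL
  have h : {y : Fin n → ℝ | y i = y j} = (LinearMap.ker L : Set _) := by
    ext y; simp [hL, LinearMap.mem_ker, sub_eq_zero]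
  rw [h]
  refine Measure.addHaar_submodule _ _ ?_
  intro htop
  have h1 : (Pi.single i 1 : Fin n → ℝ) ∈ LinearMap.ker L := by rw [htop]; trivial
  simp [hL, LinearMap.mem_ker, Pi.single_apply, hij.symm] at h1

def ordSet (n : ℕ) : Set (Fin n → ℝ) := {y | Monotone y ∧ ∀ i, y i ∈ Set.Icc (0:ℝ) 1}

lemma ordSet_meas (n : ℕ) : MeasurableSet (ordSet n) := by
  have h : ordSet n = (⋂ (p : Fin n × Fin n) (_ : p.1 ≤ p.2), {y : Fin n → ℝ | y p.1 ≤ y p.2}) ∩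
      (⋂ i, {y : Fin n → ℝ | y i ∈ Set.Icc (0:ℝ) 1}) := by
    ext y
    constructor
    · rintro ⟨h1, h2⟩
      refine ⟨?_, ?_⟩
      · simp only [Set.mem_iInter]; exact fun p hp => h1 hp
      · simp only [Set.mem_iInter]; exact fun i => h2 i
    · rintro ⟨h1, h2⟩
      simp only [Set.mem_iInter] at h1 h2
      exact ⟨fun i j hij => h1 (i, j) hij, h2⟩
  rw [h]
  refine MeasurableSet.inter ?_ ?_
  · exact MeasurableSet.iInter fun p => MeasurableSet.iInter fun _ =>
      measurableSet_le (measurable_pi_apply _) (measurable_pi_apply _)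
  · exact MeasurableSet.iInter fun i => (measurable_pi_apply i) measurableSet_Icc

lemma perm_preserving {n : ℕ} (σ : Equiv.Perm (Fin n)) :
    MeasurePreserving (fun (x : Fin n → ℝ) => x ∘ σ) volume volume := by
  have := MeasureTheory.volume_measurePreserving_piCongrLeft (fun _ : Fin n => ℝ) σ.symm
  convert this using 1
  ext x i
  simp [MeasurableEquiv.piCongrLeft, Equiv.piCongrLeft]

lemma vol_ordSet (n : ℕ) : (n.factorial : ENNReal) * volume (ordSet n) = 1 := by
  classical
  set O : Equiv.Perm (Fin n) → Set (Fin n → ℝ) := fun σ => (fun y => y ∘ σ) ⁻¹' ordSet n with hO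
  have hcover : (Set.univ.pi fun _ : Fin n => Set.Icc (0:ℝ) 1) = ⋃ σ, O σ := by
    ext y
    simp only [Set.mem_pi, Set.mem_univ, forall_true_left, Set.mem_iUnion, hO,
      Set.mem_preimage, ordSet, Set.mem_setOf_eq]
    constructor
    · intro hy
      exact ⟨Tuple.sort y, Tuple.monotone_sort y, fun i => hy _⟩
    · rintro ⟨σ, _, h2⟩ i
      have := h2 (σ.symm i)
      simpa using this
  have hnull : volume (⋃ (p : Fin n × Fin n) (_ : p.1 ≠ p.2), {y : Fin n → ℝ | y p.1 = y p.2}) = 0 := by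
    refine measure_iUnion_null fun p => ?_
    refine measure_iUnion_null fun hp => hyp_null hp
  have hdisj : Pairwise (Function.onFun (AEDisjoint volume) O) := by
    intro σ τ hστ
    refine measure_mono_null ?_ hnull
    rintro y ⟨hyσ, hyτ⟩
    by_contra hy
    simp only [Set.mem_iUnion, not_exists, Set.mem_setOf_eq] at hy
    have hinj : Function.Injective y := by
      intro i j hij
      by_contra hne
      exact hy (i, j) hne hij
    have h1 : y ∘ σ = y ∘ Tuple.sort y :=
      (Tuple.comp_sort_eq_comp_iff_monotone).2 hyσ.1
    have h2 : y ∘ τ = y ∘ Tuple.sort y :=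
      (Tuple.comp_sort_eq_comp_iff_monotone).2 hyτ.1
    apply hστ
    apply Equiv.ext; intro i
    exact hinj (congrFun (h1.trans h2.symm) i)
  have hmeas : ∀ σ, NullMeasurableSet (O σ) volume := fun σ =>
    ((ordSet_meas n).preimage (perm_preserving σ).measurable).nullMeasurableSet
  have hvol : ∀ σ, volume (O σ) = volume (ordSet n) := fun σ =>
    (perm_preserving σ).measure_preimage (ordSet_meas n).nullMeasurableSet
  have h1 : volume (⋃ σ, O σ) = ∑' σ, volume (O σ) := measure_iUnion₀ hdisj hmeas
  have hC : volume (Set.univ.pi fun _ : Fin n => Set.Icc (0:ℝ) 1) = 1 := by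
    rw [volume_pi_pi]
    simp [Real.volume_Icc]
  rw [hcover, h1] at hC
  rw [tsum_fintype] at hC
  simp only [hvol, Finset.sum_const, Finset.card_univ, Fintype.card_perm, Fintype.card_fin] at hC
  rw [← hC, nsmul_eq_mul]

def cornerSimplex (n : ℕ) : Set (Fin n → ℝ) := {x | (∀ i, 0 ≤ x i) ∧ ∑ i, x i ≤ 1}

def psMat (n : ℕ) : Matrix (Fin n) (Fin n) ℝ :=
  Matrix.of fun i j => if j ≤ i then 1 else 0

lemma psMat_mulVec {n : ℕ} (x : Fin n → ℝ) (i : Fin n) :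
    (psMat n).mulVec x i = ∑ j ∈ Finset.Iic i, x j := by
  classical
  rw [Matrix.mulVec, dotProduct]
  have h1 : ∀ j : Fin n, psMat n i j * x j = if j ∈ Finset.Iic i then x j else 0 := by
    intro j
    by_cases h : j ≤ i <;> simp [psMat, Finset.mem_Iic, h]
  rw [Finset.sum_congr rfl fun j _ => h1 j, Finset.sum_ite_mem, Finset.univ_inter]

lemma psMat_det (n : ℕ) : (psMat n).det = 1 := by
  rw [Matrix.det_of_lowerTriangular]
  · simp [psMat]
  · intro i j hij
    simp [psMat, not_le.2 hij, le_of_lt, (not_le.2 hij : ¬ j ≤ i)]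

lemma psMat_preimage (n : ℕ) :
    (Matrix.toLin' (psMat n)) ⁻¹' ordSet n = cornerSimplex n := by
  classical
  ext x
  simp only [Set.mem_preimage, Matrix.toLin'_apply, ordSet, Set.mem_setOf_eq,
    cornerSimplex, Set.mem_Icc]
  constructor
  · rintro ⟨hmono, hicc⟩
    constructor
    · intro i
      by_cases hi : (i : ℕ) = 0
      · have h0 : Finset.Iio i = ∅ := by
          ext j; simp [Finset.mem_Iio, Fin.lt_def, hi]
        have := (hicc i).1
        rw [psMat_mulVec, ← Finset.Iio_insert, Finset.sum_insert (by simp)] at this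
        rw [h0] at this
        simpa using this
      · have hi1 : (i : ℕ) - 1 < n := by omega
        set i' : Fin n := ⟨(i : ℕ) - 1, hi1⟩ with hi'
        have hIio : Finset.Iio i = Finset.Iic i' := by
          ext j
          simp only [Finset.mem_Iio, Finset.mem_Iic, Fin.lt_def, Fin.le_def, hi']
          omega
        have hle : i' ≤ i := by simp only [Fin.le_def, hi']; omega
        have := hmono hle
        rw [psMat_mulVec, psMat_mulVec, hIio.symm, ← Finset.Iio_insert,
          Finset.sum_insert (by simp)] at this
        linarith [this]
    · rcases Nat.eq_zero_or_pos n with hn | hn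
      · subst hn; simp
      · have hlast : (Finset.univ : Finset (Fin n)) = Finset.Iic ⟨n - 1, by omega⟩ := by
          ext j; simp [Finset.mem_Iic, Fin.le_def]; omega
        have := (hicc ⟨n - 1, by omega⟩).2
        rw [psMat_mulVec] at this
        rw [hlast]
        exact this
  · rintro ⟨hpos, hsum⟩
    have gnn : ∀ i : Fin n, 0 ≤ (psMat n).mulVec x i := by
      intro i; rw [psMat_mulVec]; exact Finset.sum_nonneg fun j _ => hpos j
    have gle : ∀ i : Fin n, (psMat n).mulVec x i ≤ 1 := by
      intro i; rw [psMat_mulVec]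
      calc ∑ j ∈ Finset.Iic i, x j ≤ ∑ j, x j :=
            Finset.sum_le_sum_of_subset_of_nonneg (Finset.subset_univ _)
              (fun j _ _ => hpos j)
        _ ≤ 1 := hsum
    refine ⟨?_, fun i => ⟨gnn i, gle i⟩⟩
    intro i j hij
    rw [psMat_mulVec, psMat_mulVec]
    exact Finset.sum_le_sum_of_subset_of_nonneg (Finset.Iic_subset_Iic.2 hij)
      (fun k _ _ => hpos k)

lemma vol_corner (n : ℕ) : (n.factorial : ENNReal) * volume (cornerSimplex n) = 1 := by
  rw [← psMat_preimage]
  have hdet : LinearMap.det (Matrix.toLin' (psMat n)) ≠ 0 := by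
    rw [LinearMap.det_toLin', psMat_det]; norm_num
  rw [Measure.addHaar_preimage_linearMap volume hdet]
  rw [LinearMap.det_toLin', psMat_det]
  simpa using vol_ordSet n

/-! ### Polar dual membership -/

lemma mem_polar_iff {d : ℕ} (r : ℝ) (v : Fin (d+1) → Fin d → ℤ) (y : Fin d → ℝ) :
    y ∈ polarDual ((fun x => r • x - 1) '' simplexOf v) ↔
      ∀ i, ∑ j, (r * (v i j : ℝ) - 1) * y j ≤ 1 := by
  have hmem : ∀ x : Fin d → ℝ, (∑ j, ((r • x - 1) j) * y j) = ∑ j, (r * x j - 1) * y j := by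
    intro x; refine Finset.sum_congr rfl fun j _ => ?_
    simp [smul_eq_mul]
  constructor
  · intro hy i
    have hvx : toReal (v i) ∈ simplexOf v := subset_convexHull ℝ _ ⟨i, rfl⟩
    have := hy _ ⟨toReal (v i), hvx, rfl⟩
    rw [hmem] at this
    simpa [toReal] using this
  · intro hy x hx
    obtain ⟨x', hx', rfl⟩ := hx
    rw [hmem]
    have hconv : Convex ℝ {z : Fin d → ℝ | ∑ j, (r * z j - 1) * y j ≤ 1} := by
      have heq : {z : Fin d → ℝ | ∑ j, (r * z j - 1) * y j ≤ 1} =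
          {z : Fin d → ℝ | (∑ j, z j * (r * y j)) ≤ 1 + ∑ j, y j} := by
        ext z
        have h : ∑ j, (r * z j - 1) * y j = (∑ j, z j * (r * y j)) - ∑ j, y j := by
          rw [← Finset.sum_sub_distrib]
          exact Finset.sum_congr rfl fun j _ => by ring
        simp only [Set.mem_setOf_eq, h]
        constructor <;> intro <;> linarith
      rw [heq]
      refine convex_halfSpace_le ⟨fun p q => ?_, fun cc p => ?_⟩ _
      · simp only [Pi.add_apply, add_mul, Finset.sum_add_distrib]
      · simp only [Pi.smul_apply, smul_eq_mul, Finset.mul_sum, mul_assoc]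
    have hsub : Set.range (fun i => toReal (v i)) ⊆
        {z : Fin d → ℝ | ∑ j, (r * z j - 1) * y j ≤ 1} := by
      rintro _ ⟨i, rfl⟩
      simpa [toReal] using hy i
    exact convexHull_min hsub hconv hx'

/-! ### Reindexing -/

lemma reindex_sum (m : ℕ) (f : ℕ → ℝ) :
    ∑ k : Fin (m+1), (if (k:ℕ) = m then f 0 else f ((k:ℕ)+1)) =
      ∑ i ∈ Finset.range (m+1), f i := by
  rw [Fin.sum_univ_eq_sum_range (fun i => if i = m then f 0 else f (i+1)) (m+1)]
  rw [Finset.sum_range_succ, Finset.sum_range_succ']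
  rw [if_pos rfl]
  rw [Finset.sum_congr rfl (fun i hi => if_neg (by simp at hi; omega))]

lemma reindex_prod (m : ℕ) (f : ℕ → ℝ) :
    ∏ k : Fin (m+1), (if (k:ℕ) = m then f 0 else f ((k:ℕ)+1)) =
      ∏ i ∈ Finset.range (m+1), f i := by
  rw [Fin.prod_univ_eq_prod_range (fun i => if i = m then f 0 else f (i+1)) (m+1)]
  rw [Finset.prod_range_succ, Finset.prod_range_succ']
  rw [if_pos rfl]
  rw [Finset.prod_congr rfl (fun i hi => if_neg (by simp at hi; omega))]

def cvec (m : ℕ) (a : ℕ → ℤ) : Fin (m+1) → ℝ :=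
  fun k => if (k:ℕ) = m then (a 0 : ℝ) else (a ((k:ℕ)+1) : ℝ)

def Mmat (m : ℕ) (a : ℕ → ℤ) (r : ℕ) : Matrix (Fin (m+1)) (Fin (m+1)) ℝ :=
  Matrix.of fun k j =>
    cvec m a k * (1 - if (k:ℕ) = m then 0 else if j = k then (r:ℝ) else 0)
      / ((r:ℝ) * (a (m+1) : ℝ))

def evec (m : ℕ) (a : ℕ → ℤ) (r : ℕ) : Fin (m+1) → ℝ :=
  fun k => cvec m a k / ((r:ℝ) * (a (m+1) : ℝ))

lemma hphi (m : ℕ) (a : ℕ → ℤ) (r : ℕ) (y : Fin (m+1) → ℝ) (k : Fin (m+1)) :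
    ((Mmat m a r).mulVec y + evec m a r) k =
      cvec m a k * (1 + (∑ j, y j) - (if (k:ℕ) = m then 0 else (r:ℝ) * y k))
        / ((r:ℝ) * (a (m+1) : ℝ)) := by
  classical
  have hM : (Mmat m a r).mulVec y k = ∑ j, Mmat m a r k j * y j := rfl
  by_cases hk : (k:ℕ) = m
  · have h1 : ∀ j : Fin (m+1), Mmat m a r k j * y j
        = (cvec m a k / ((r:ℝ) * (a (m+1) : ℝ))) * y j := by
      intro j; simp only [Mmat, Matrix.of_apply, if_pos hk]; ring
    simp only [Pi.add_apply, hM, Finset.sum_congr rfl fun j _ => h1 j, ← Finset.mul_sum,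
      evec, if_pos hk]
    ring
  · have h1 : ∀ j : Fin (m+1), Mmat m a r k j * y j
        = (cvec m a k / ((r:ℝ) * (a (m+1) : ℝ))) * y j
          - (if j = k then (cvec m a k * (r:ℝ) / ((r:ℝ) * (a (m+1) : ℝ))) * y j else 0) := by
      intro j
      by_cases hj : j = k <;> simp [Mmat, hk, hj] <;> ring
    rw [Pi.add_apply, hM, Finset.sum_congr rfl fun j _ => h1 j, Finset.sum_sub_distrib,
      ← Finset.mul_sum, Finset.sum_ite_eq' Finset.univ k]
    simp only [Finset.mem_univ, if_pos, evec, if_neg hk]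
    ring

/-- Determinant of `Mmat`. -/
lemma det_Mmat (m : ℕ) (a : ℕ → ℤ) (r : ℕ) :
    (Mmat m a r).det =
      (∏ k, (cvec m a k / ((r:ℝ) * (a (m+1) : ℝ)))) * (-(r:ℝ))^m := by
  classical
  set R : ℝ := (r:ℝ) * (a (m+1) : ℝ) with hR
  set A1 : Matrix (Fin (m+1)) (Fin (m+1)) ℝ :=
    Matrix.of (fun l j => if (l:ℕ) = m then 1 else if j = l then (1:ℝ) else 0) with hA1
  set A2 : Matrix (Fin (m+1)) (Fin (m+1)) ℝ :=
    Matrix.of (fun k l => (if l = Fin.last m then 1 else 0)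
      - (if (k:ℕ) = m then 0 else if l = k then (r:ℝ) else 0)) with hA2
  have hfact : Mmat m a r = Matrix.diagonal (fun k => cvec m a k / R) * (A2 * A1) := by
    ext k j
    rw [Matrix.diagonal_mul]
    have hB : (A2 * A1) k j = ∑ l, A2 k l * A1 l j := rfl
    by_cases hk : (k:ℕ) = m
    · have h1 : ∀ l : Fin (m+1), A2 k l * A1 l j = if l = Fin.last m then A1 l j else 0 := by
        intro l
        by_cases hl : l = Fin.last m <;> simp [hA2, hl, hk]
      rw [hB, Finset.sum_congr rfl fun l _ => h1 l, Finset.sum_ite_eq' Finset.univ]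
      simp only [Finset.mem_univ, if_pos]
      have : A1 (Fin.last m) j = 1 := by simp [hA1]
      rw [this, Mmat]
      simp only [Matrix.of_apply, if_pos hk]
      ring
    · have h1 : ∀ l : Fin (m+1), A2 k l * A1 l j
          = (if l = Fin.last m then A1 l j else 0) - (if l = k then (r:ℝ) * A1 l j else 0) := by
        intro l
        rw [hA2]
        simp only [Matrix.of_apply, if_neg hk, sub_mul]
        congr 1
        · by_cases hl : l = Fin.last m <;> simp [hl]
        · by_cases hlk : l = k <;> simp [hlk]
      rw [hB, Finset.sum_congr rfl fun l _ => h1 l, Finset.sum_sub_distrib,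
        Finset.sum_ite_eq' Finset.univ, Finset.sum_ite_eq' Finset.univ]
      simp only [Finset.mem_univ, if_pos]
      have h2 : A1 (Fin.last m) j = 1 := by simp [hA1]
      have h3 : A1 k j = if j = k then 1 else 0 := by simp [hA1, hk]
      rw [h2, h3, Mmat]
      simp only [Matrix.of_apply, if_neg hk]
      by_cases hj : j = k <;> simp [hj] <;> ring
  rw [hfact, Matrix.det_mul, Matrix.det_mul, Matrix.det_diagonal]
  have hdA1 : A1.det = 1 := by
    rw [Matrix.det_of_lowerTriangular]
    · refine Finset.prod_eq_one fun k _ => ?_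
      by_cases hk : (k:ℕ) = m <;> simp [hA1, hk]
    · intro i j hij
      have hij' : i < j := hij
      have h1 : (i:ℕ) ≠ m := by
        have := j.isLt; rw [Fin.lt_def] at hij'; omega
      have h2 : j ≠ i := by
        intro h; rw [h] at hij'; exact lt_irrefl _ hij'
      simp [hA1, h1, h2]
  have hdA2 : A2.det = (-(r:ℝ))^m := by
    rw [Matrix.det_of_upperTriangular]
    · have hdiag : ∀ k : Fin (m+1), A2 k k = if (k:ℕ) = m then 1 else -(r:ℝ) := by
        intro k
        by_cases hk : (k:ℕ) = m
        · have hkl : k = Fin.last m := by rw [Fin.ext_iff, Fin.val_last]; exact hk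
          simp [hA2, hkl, hk]
        · have hkl : k ≠ Fin.last m := by
            intro h; rw [h, Fin.val_last] at hk; exact hk rfl
          simp [hA2, hkl, hk]
      rw [Finset.prod_congr rfl fun k _ => hdiag k]
      have := reindex_prod m (fun i => if i = 0 then 1 else (-(r:ℝ)))
      rw [Finset.prod_congr rfl (fun k _ => ?_), this]
      · rw [Finset.prod_range_succ']
        simp [Finset.prod_const]
      · by_cases hk : (k:ℕ) = m <;> simp [hk]
    · intro i j hij
      have hij' : j < i := hij
      have h1 : j ≠ Fin.last m := by
        intro h
        have hi := i.isLt
        rw [Fin.lt_def] at hij'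
        rw [Fin.ext_iff, Fin.val_last] at h
        omega
      have h2 : j ≠ i := by
        intro h; rw [h] at hij'; exact lt_irrefl _ hij'
      simp [hA2, h1, h2]
  rw [hdA1, hdA2]
  ring

section Eval
variable (m : ℕ) (a : ℕ → ℤ) (r : ℕ)

lemma e0 (y : Fin (m+1) → ℝ) :
    ∑ j, ((r:ℝ) * ((simplexVerts (m+1) a 0 j : ℤ):ℝ) - 1) * y j = -∑ j, y j := by
  rw [← Finset.sum_neg_distrib]
  refine Finset.sum_congr rfl fun j _ => ?_
  have h : simplexVerts (m+1) a 0 j = 0 := by simp [simplexVerts]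
  rw [h]; push_cast; ring

lemma emid (y : Fin (m+1) → ℝ) (k : Fin (m+1)) (hk : (k:ℕ) ≠ m) :
    ∑ j, ((r:ℝ) * ((simplexVerts (m+1) a ⟨(k:ℕ)+1, by omega⟩ j : ℤ):ℝ) - 1) * y j
      = (r:ℝ) * y k - ∑ j, y j := by
  have hv : ∀ j : Fin (m+1),
      simplexVerts (m+1) a ⟨(k:ℕ)+1, by omega⟩ j = if j = k then 1 else 0 := by
    intro j
    have h1 : ((⟨(k:ℕ)+1, by omega⟩ : Fin (m+2)) : ℕ) = (k:ℕ)+1 := rfl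
    simp only [simplexVerts, h1]
    rw [if_neg (by omega), if_neg (by omega)]
    by_cases hj : j = k
    · subst hj; rw [if_pos rfl, if_pos rfl]
    · rw [if_neg (by rw [Fin.ext_iff] at hj; omega), if_neg hj]
  have h2 : ∀ j : Fin (m+1),
      ((r:ℝ) * ((simplexVerts (m+1) a ⟨(k:ℕ)+1, by omega⟩ j : ℤ):ℝ) - 1) * y j
        = (if j = k then (r:ℝ) * y j else 0) - y j := by
    intro j
    rw [hv j]
    by_cases hj : j = k <;> simp [hj] <;> ring
  rw [Finset.sum_congr rfl fun j _ => h2 j, Finset.sum_sub_distrib,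
    Finset.sum_ite_eq' Finset.univ]
  simp

lemma elast (y : Fin (m+1) → ℝ) :
    ∑ j, ((r:ℝ) * ((simplexVerts (m+1) a (Fin.last (m+1)) j : ℤ):ℝ) - 1) * y j
      = ((r:ℝ) * (a (m+1) : ℝ) - 1) * (∑ j, y j)
        - (r:ℝ) * ∑ j : Fin (m+1), (if (j:ℕ) = m then 0 else ((a ((j:ℕ)+1) : ℤ):ℝ)) * y j := by
  have h2 : ∀ j : Fin (m+1),
      ((r:ℝ) * ((simplexVerts (m+1) a (Fin.last (m+1)) j : ℤ):ℝ) - 1) * y j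
        = ((r:ℝ) * (a (m+1) : ℝ) - 1) * y j
          - (r:ℝ) * ((if (j:ℕ) = m then 0 else ((a ((j:ℕ)+1) : ℤ):ℝ)) * y j) := by
    intro j
    have h1 : ((Fin.last (m+1)) : ℕ) = m+1 := Fin.val_last _
    have hv : simplexVerts (m+1) a (Fin.last (m+1)) j
        = if (j:ℕ) = m then a (m+1) else a (m+1) - a ((j:ℕ)+1) := by
      simp [simplexVerts, h1]
    rw [hv]
    by_cases hj : (j:ℕ) = m
    · rw [if_pos hj, if_pos hj]; push_cast; ring
    · rw [if_neg hj, if_neg hj]; push_cast; ring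
  rw [Finset.sum_congr rfl fun j _ => h2 j, Finset.sum_sub_distrib]
  congr 1
  · exact (Finset.mul_sum _ _ _).symm
  · exact (Finset.mul_sum _ _ _).symm

end Eval

lemma polar_eq_preimage (m : ℕ) (a : ℕ → ℤ) (r : ℕ) (hr : 1 ≤ r)
    (ha : ∀ i, i < m+1 → 1 ≤ a i ∧ a i < a (m+1))
    (hsum : (r:ℤ) * a (m+1) = (∑ i ∈ Finset.range (m+1), a i) + 1) :
    polarDual ((fun x => (r:ℝ) • x - 1) '' simplexOf (simplexVerts (m+1) a))
      = (fun y => (Mmat m a r).mulVec y + evec m a r) ⁻¹' cornerSimplex (m+1) := by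
  have had : (0:ℤ) < a (m+1) := by have h := ha 0 (by omega); omega
  have hadR : (0:ℝ) < ((a (m+1) : ℤ) : ℝ) := by exact_mod_cast had
  have hrR : (0:ℝ) < (r:ℝ) := by exact_mod_cast Nat.lt_of_lt_of_le Nat.zero_lt_one hr
  have hR : (0:ℝ) < (r:ℝ) * ((a (m+1):ℤ):ℝ) := mul_pos hrR hadR
  have hc : ∀ k : Fin (m+1), 0 < cvec m a k := by
    intro k
    rw [cvec]
    split
    · exact_mod_cast lt_of_lt_of_le zero_lt_one (ha 0 (by omega)).1
    · have hk := k.isLt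
      exact_mod_cast lt_of_lt_of_le zero_lt_one (ha ((k:ℕ)+1) (by omega)).1
  have hsumc : ∑ k : Fin (m+1), cvec m a k = (r:ℝ) * ((a (m+1):ℤ):ℝ) - 1 := by
    have h1 : ∑ k : Fin (m+1), cvec m a k
        = ∑ i ∈ Finset.range (m+1), ((a i : ℤ):ℝ) := reindex_sum m (fun i => ((a i : ℤ):ℝ))
    rw [h1]
    have h2 : ((∑ i ∈ Finset.range (m+1), a i : ℤ) : ℝ)
        = ∑ i ∈ Finset.range (m+1), ((a i : ℤ):ℝ) := by push_cast; rfl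
    rw [← h2]
    have h3 : (∑ i ∈ Finset.range (m+1), a i : ℤ) = (r:ℤ) * a (m+1) - 1 := by omega
    rw [h3]; push_cast; ring
  ext y
  simp only [Set.mem_preimage, cornerSimplex, Set.mem_setOf_eq]
  rw [mem_polar_iff]
  set S : ℝ := ∑ j : Fin (m+1), y j with hS
  have hexp : ((r:ℝ)*((a (m+1):ℤ):ℝ) - 1) * (1 + S)
      = ((r:ℝ)*((a (m+1):ℤ):ℝ) - 1) * S + ((r:ℝ)*((a (m+1):ℤ):ℝ) - 1) := by ring
  have hs2 : ∑ k : Fin (m+1), ((Mmat m a r).mulVec y + evec m a r) k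
      = (∑ k : Fin (m+1), cvec m a k * (1 + S
          - (if (k:ℕ) = m then 0 else (r:ℝ) * y k))) / ((r:ℝ) * ((a (m+1):ℤ):ℝ)) := by
    rw [Finset.sum_div]
    exact Finset.sum_congr rfl fun k _ => hphi m a r y k
  have hid : ∑ k : Fin (m+1), cvec m a k * (1 + S - (if (k:ℕ)=m then 0 else (r:ℝ)*y k))
      = ((r:ℝ)*((a (m+1):ℤ):ℝ) - 1) * (1 + S)
        - (r:ℝ) * ∑ j : Fin (m+1), (if (j:ℕ)=m then 0 else ((a ((j:ℕ)+1):ℤ):ℝ)) * y j := by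
    have hterm : ∀ k : Fin (m+1),
        cvec m a k * (1 + S - (if (k:ℕ)=m then 0 else (r:ℝ)*y k))
          = cvec m a k * (1 + S)
            - (r:ℝ) * ((if (k:ℕ)=m then 0 else ((a ((k:ℕ)+1):ℤ):ℝ)) * y k) := by
      intro k
      by_cases hk : (k:ℕ) = m
      · rw [if_pos hk, if_pos hk]; ring
      · rw [if_neg hk, if_neg hk]
        have hck : cvec m a k = ((a ((k:ℕ)+1):ℤ):ℝ) := by rw [cvec]; rw [if_neg hk]
        rw [hck]; ring
    rw [Finset.sum_congr rfl fun k _ => hterm k, Finset.sum_sub_distrib,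
      ← Finset.sum_mul, hsumc]
    congr 1
    exact (Finset.mul_sum _ _ _).symm
  constructor
  · intro H
    have h00 : -S ≤ 1 := by have h := H 0; rwa [e0] at h
    constructor
    · intro k
      rw [hphi]
      refine div_nonneg (mul_nonneg (hc k).le ?_) hR.le
      by_cases hk : (k:ℕ) = m
      · rw [if_pos hk]; linarith
      · rw [if_neg hk]
        have h := H ⟨(k:ℕ)+1, by omega⟩
        rw [emid m a r y k hk] at h
        linarith
    · have hl := H (Fin.last (m+1))
      rw [elast] at hl
      rw [hs2, div_le_one hR, hid]
      linarith
  · rintro ⟨H1, H2⟩ i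
    have hX : ∀ k : Fin (m+1),
        0 ≤ 1 + S - (if (k:ℕ)=m then 0 else (r:ℝ)*y k) := by
      intro k
      have h := H1 k
      rw [hphi] at h
      by_contra hneg
      push_neg at hneg
      have hlt : cvec m a k * (1 + S - (if (k:ℕ)=m then 0 else (r:ℝ)*y k))
          / ((r:ℝ) * ((a (m+1):ℤ):ℝ)) < 0 :=
        div_neg_of_neg_of_pos (mul_neg_of_pos_of_neg (hc k) hneg) hR
      linarith
    by_cases hi0 : (i:ℕ) = 0
    · have hieq : i = 0 := Fin.ext (by simp [hi0])
      rw [hieq, e0]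
      have h := hX (Fin.last m)
      rw [if_pos (Fin.val_last m)] at h
      linarith
    · by_cases hid2 : (i:ℕ) = m+1
      · have hieq : i = Fin.last (m+1) := Fin.ext (by rw [Fin.val_last]; exact hid2)
        rw [hieq, elast]
        rw [hs2, div_le_one hR, hid] at H2
        linarith
      · have hklt : (i:ℕ) - 1 < m+1 := by have := i.isLt; omega
        set k : Fin (m+1) := ⟨(i:ℕ)-1, hklt⟩ with hkdef
        have hkval : (k:ℕ) = (i:ℕ) - 1 := rfl
        have hieq : i = ⟨(k:ℕ)+1, by omega⟩ := Fin.ext (by show (i:ℕ) = (k:ℕ)+1; omega)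
        have hkm : (k:ℕ) ≠ m := by rw [hkval]; have := i.isLt; omega
        rw [hieq, emid m a r y k hkm]
        have h := hX k
        rw [if_neg hkm] at h
        linarith

/-- for the Gorenstein simplex `Δ(A)` of index `r` and
`Δ = r·Δ(A) - (1,…,1)`, the normalized volume of the dual reflexive simplex `Δ^∨`
equals `r · b 0 ⋯ b (d-1)` where `b i = a d / a i`. -/
theorem statement15 {d : ℕ} (hd : 1 ≤ d) (r : ℕ) (hr : 1 ≤ r) (a : ℕ → ℤ)
    (ha : ∀ i, i < d → 1 ≤ a i ∧ a i < a d)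
    (hdvd : ∀ i, i < d → a i ∣ a d)
    (hsum : (r : ℤ) * a d = (∑ i ∈ Finset.range d, a i) + 1) :
    (Nat.factorial d : ENNReal) *
        volume (polarDual ((fun x => (r : ℝ) • x - 1) '' simplexOf (simplexVerts d a)))
      = ENNReal.ofReal ((r : ℝ) * ∏ i ∈ Finset.range d, ((a d : ℝ) / (a i : ℝ))) := by
  obtain ⟨m, rfl⟩ : ∃ m, d = m + 1 := ⟨d - 1, by omega⟩
  have had : (0:ℤ) < a (m+1) := by have h := ha 0 (by omega); omega
  have hadR : (0:ℝ) < ((a (m+1) : ℤ) : ℝ) := by exact_mod_cast had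
  have hrR : (0:ℝ) < (r:ℝ) := by exact_mod_cast Nat.lt_of_lt_of_le Nat.zero_lt_one hr
  have hR : (0:ℝ) < (r:ℝ) * ((a (m+1):ℤ):ℝ) := mul_pos hrR hadR
  have hc : ∀ k : Fin (m+1), 0 < cvec m a k := by
    intro k
    rw [cvec]
    split
    · exact_mod_cast lt_of_lt_of_le zero_lt_one (ha 0 (by omega)).1
    · have hk := k.isLt
      exact_mod_cast lt_of_lt_of_le zero_lt_one (ha ((k:ℕ)+1) (by omega)).1
  rw [polar_eq_preimage m a r hr ha hsum]
  have hpre : (fun y => (Mmat m a r).mulVec y + evec m a r) ⁻¹' cornerSimplex (m+1)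
      = Matrix.toLin' (Mmat m a r) ⁻¹'
          ((fun z => z + evec m a r) ⁻¹' cornerSimplex (m+1)) := by
    ext y; simp [Matrix.toLin'_apply]
  have hdetval : (Mmat m a r).det
      = (∏ k : Fin (m+1), (cvec m a k / ((r:ℝ)*((a (m+1):ℤ):ℝ)))) * (-(r:ℝ))^m :=
    det_Mmat m a r
  have hprodpos : 0 < ∏ k : Fin (m+1), (cvec m a k / ((r:ℝ)*((a (m+1):ℤ):ℝ))) :=
    Finset.prod_pos fun k _ => div_pos (hc k) hR
  have hdetne : LinearMap.det (Matrix.toLin' (Mmat m a r)) ≠ 0 := by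
    rw [LinearMap.det_toLin', hdetval]
    exact mul_ne_zero (ne_of_gt hprodpos)
      (pow_ne_zero _ (neg_ne_zero.2 (ne_of_gt hrR)))
  rw [hpre, Measure.addHaar_preimage_linearMap volume hdetne,
    measure_preimage_add_right]
  have hcalc : (Nat.factorial (m+1) : ENNReal) *
      (ENNReal.ofReal |(LinearMap.det (Matrix.toLin' (Mmat m a r)))⁻¹|
        * volume (cornerSimplex (m+1)))
      = ENNReal.ofReal |(LinearMap.det (Matrix.toLin' (Mmat m a r)))⁻¹|
        * ((Nat.factorial (m+1) : ENNReal) * volume (cornerSimplex (m+1))) := by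
    ring
  rw [hcalc, vol_corner (m+1), mul_one]
  congr 1
  rw [LinearMap.det_toLin', hdetval]
  -- real computation
  have hprodc : ∏ k : Fin (m+1), cvec m a k = ∏ i ∈ Finset.range (m+1), ((a i : ℤ):ℝ) :=
    reindex_prod m (fun i => ((a i : ℤ):ℝ))
  have hprodApos : 0 < ∏ i ∈ Finset.range (m+1), ((a i : ℤ):ℝ) :=
    Finset.prod_pos fun i hi => by
      have := (ha i (Finset.mem_range.mp hi)).1
      exact_mod_cast lt_of_lt_of_le zero_lt_one this
  have hprodAne : (∏ i ∈ Finset.range (m+1), ((a i : ℤ):ℝ)) ≠ 0 := ne_of_gt hprodApos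
  have habs : |((∏ k : Fin (m+1), (cvec m a k / ((r:ℝ)*((a (m+1):ℤ):ℝ)))) * (-(r:ℝ))^m)⁻¹|
      = ((∏ k : Fin (m+1), (cvec m a k / ((r:ℝ)*((a (m+1):ℤ):ℝ)))) * ((r:ℝ))^m)⁻¹ := by
    rw [abs_inv, abs_mul, abs_of_pos hprodpos, abs_pow, abs_neg, abs_of_pos hrR]
  rw [habs]
  have hsplit : ∏ k : Fin (m+1), (cvec m a k / ((r:ℝ)*((a (m+1):ℤ):ℝ)))
      = (∏ i ∈ Finset.range (m+1), ((a i : ℤ):ℝ))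
          / ((r:ℝ)*((a (m+1):ℤ):ℝ))^(m+1) := by
    rw [Finset.prod_div_distrib, hprodc, Finset.prod_const, Finset.card_univ,
      Fintype.card_fin]
  rw [hsplit]
  have hrhs : ∏ i ∈ Finset.range (m+1), (((a (m+1):ℤ) : ℝ) / ((a i:ℤ) : ℝ))
      = ((a (m+1):ℤ):ℝ)^(m+1) / ∏ i ∈ Finset.range (m+1), ((a i : ℤ):ℝ) := by
    rw [Finset.prod_div_distrib, Finset.prod_const, Finset.card_range]
  push_cast
  push_cast at hrhs hprodAne
  rw [hrhs]
  field_simp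
  ring
end
end
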